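/- arXiv:0803.2719 — 3 statements merged into one kernel-verified Lean document; each statement's English description precedes it below -/
import Mathlib

section
/- Let F and G be summable ball kernels. Suppose v, w : ℚ_p × [0, ∞) → ℂ both satisfy: there exist a ball and a γ ∈ ℤ (possibly different for v and for w) such that for every t ≥ 0 the function v(·, t) (respectively w(·, t)) vanishes outside that ball, is constant on every ball of radius p^γ, and has ∫ v(x, t) dμ(x) = 0 (respectively for w); for each x the function t ↦ v(x, t) (respectively t ↦ w(x, t)) is continuously differentiable on [0, ∞); each of v and w satisfies the quadratic cascade equation for all x ∈ ℚ_p and t > 0; and v(x, 0) = w(x, 0) for all x. Then v(x, t) = w(x, t) for all x ∈ ℚ_p and t ≥ 0. -/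
open MeasureTheory
open scoped ENNReal

/-- The index (base-`p` logarithm of the radius) of the smallest ball of `ℚ_[p]`
containing the two points `x` and `y` (for `x ≠ y`): its radius is `‖x - y‖ = p ^ (-(x-y).valuation)`. -/
noncomputable def supIdx {p : ℕ} [Fact p.Prime] (x y : ℚ_[p]) : ℤ := -(x - y).valuation

/-- The index of the smallest ball containing the three points `x`, `ξ`, `η`
(for pairwise distinct points): its radius is `max (‖x-ξ‖, ‖x-η‖, ‖ξ-η‖)`. -/
noncomputable def sup3Idx {p : ℕ} [Fact p.Prime] (x ξ η : ℚ_[p]) : ℤ :=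
  max (supIdx x ξ) (max (supIdx x η) (supIdx ξ η))

/-- A ball kernel: a function on balls of `ℚ_[p]`, encoded as a function of a center and
an index (log_p of the radius), independent of the choice of center in the ball. -/
def IsBallKernel {p : ℕ} [Fact p.Prime] (F : ℚ_[p] → ℤ → ℂ) : Prop :=
  ∀ c c' : ℚ_[p], ∀ γ : ℤ, dist c c' ≤ (p : ℝ) ^ γ → F c γ = F c' γ

/-- Summability of a ball kernel: for every ball `B(c, p^γ₀)`,
`Σ_{γ > γ₀} ‖F(B(c, p^γ))‖ (p^γ - p^(γ-1)) < ∞`. -/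
def KernelSummable {p : ℕ} [Fact p.Prime] (F : ℚ_[p] → ℤ → ℂ) : Prop :=
  ∀ c : ℚ_[p], ∀ γ₀ : ℤ, Summable (fun n : ℕ =>
    ‖F c (γ₀ + 1 + n)‖ * ((p : ℝ) ^ (γ₀ + 1 + (n : ℤ)) - (p : ℝ) ^ (γ₀ + (n : ℤ))))

/-- An ultrametric wavelet with ball `B(c, p^γ)`: vanishes outside the ball, is constant
on each of the `p` maximal subballs (balls of radius `p^(γ-1)`), has zero mean, and is
not identically zero. -/
def IsWavelet {p : ℕ} [Fact p.Prime] [MeasurableSpace ℚ_[p]] (μ : Measure ℚ_[p])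
    (ψ : ℚ_[p] → ℂ) (c : ℚ_[p]) (γ : ℤ) : Prop :=
  (∀ x, (p : ℝ) ^ γ < dist x c → ψ x = 0) ∧
    (∀ x y, dist x y ≤ (p : ℝ) ^ (γ - 1) → ψ x = ψ y) ∧
    (∫ x, ψ x ∂μ) = 0 ∧ ψ ≠ 0

/-- The eigenvalue `λ_I = T(I) ν(I) + Σ_{J > I} T(J) (ν(J) - ν(J,I))` attached to the ball
`I = B(c, p^γI)` and the ball kernel `T`. -/
noncomputable def lamBall {p : ℕ} [Fact p.Prime] (T : ℚ_[p] → ℤ → ℂ) (c : ℚ_[p]) (γI : ℤ) : ℂ :=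
  T c γI * (((p : ℝ) ^ γI : ℝ) : ℂ) +
    ∑' n : ℕ, T c (γI + 1 + n) *
      (((p : ℝ) ^ (γI + 1 + (n : ℤ)) - (p : ℝ) ^ (γI + (n : ℤ)) : ℝ) : ℂ)

/-- The coefficient `Φ_{I,J}` for balls `J = B(c, p^γJ) ⊊ I = B(c, p^γI)`. -/
noncomputable def PhiIJ {p : ℕ} [Fact p.Prime] (F : ℚ_[p] → ℤ → ℂ) (c : ℚ_[p])
    (γI γJ : ℤ) : ℂ :=
  (((p : ℝ) ^ (2 * (γI - 1)) : ℝ) : ℂ) * F c γI - (((p : ℝ) ^ (2 * γJ) : ℝ) : ℂ) * F c γJ -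
    ∑ γ ∈ Finset.Ioo γJ γI, (((p : ℝ) ^ (2 * γ) - (p : ℝ) ^ (2 * γ - 2) : ℝ) : ℂ) * F c γ

/-- The (spatial) operator of the quadratic cascade equation:
`∫∫ F(sup(x,ξ,η)) f(ξ)(f(η) - f(x)) dμ(ξ) dμ(η) + ∫ G(sup(x,ξ))(f(x) - f(ξ)) dμ(ξ)`. -/
noncomputable def cascadeOp {p : ℕ} [Fact p.Prime] [MeasurableSpace ℚ_[p]]
    (μ : Measure ℚ_[p]) (F G : ℚ_[p] → ℤ → ℂ) (f : ℚ_[p] → ℂ) (x : ℚ_[p]) : ℂ :=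
  (∫ ξ, ∫ η, F x (sup3Idx x ξ η) * (f ξ * (f η - f x)) ∂μ ∂μ) +
    ∫ ξ, G x (supIdx x ξ) * (f x - f ξ) ∂μ

/-- `v` satisfies the quadratic cascade equation
`∂ₜ v(x,t) + ∫∫ F(sup(x,ξ,η)) v(ξ,t)(v(η,t) - v(x,t)) dμ(ξ) dμ(η)
  + ∫ G(sup(x,ξ))(v(x,t) - v(ξ,t)) dμ(ξ) = 0` for all `x ∈ ℚ_p` and all `t > 0`. -/
def SatisfiesCascade {p : ℕ} [Fact p.Prime] [MeasurableSpace ℚ_[p]]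
    (μ : Measure ℚ_[p]) (F G : ℚ_[p] → ℤ → ℂ) (v : ℚ_[p] → ℝ → ℂ) : Prop :=
  ∀ x : ℚ_[p], ∀ t : ℝ, 0 < t →
    HasDerivAt (fun s => v x s) (-(cascadeOp μ F G (fun y => v y t) x)) t

set_option linter.unusedSectionVars false
set_option linter.unusedVariables false
namespace CascadeAux
variable {p : ℕ} [hp : Fact p.Prime]

lemma one_lt_p : (1:ℝ) < p := by exact_mod_cast hp.out.one_lt

lemma p_pos : (0:ℝ) < p := lt_trans one_pos one_lt_p

lemma p_ne_one : (p:ℝ) ≠ 1 := ne_of_gt one_lt_p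

lemma dist_eq_pow_supIdx {x y : ℚ_[p]} (h : x ≠ y) : dist x y = (p:ℝ) ^ (supIdx x y) := by
  rw [dist_eq_norm, Padic.norm_eq_zpow_neg_valuation (sub_ne_zero.2 h)]; rfl

lemma supIdx_le_iff {x y : ℚ_[p]} (h : x ≠ y) {γ : ℤ} :
    supIdx x y ≤ γ ↔ dist x y ≤ (p:ℝ)^γ := by
  rw [dist_eq_pow_supIdx h, zpow_le_zpow_iff_right₀ one_lt_p]

lemma lt_supIdx_iff {x y : ℚ_[p]} (h : x ≠ y) {γ : ℤ} :
    γ < supIdx x y ↔ (p:ℝ)^γ < dist x y := by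
  rw [dist_eq_pow_supIdx h, zpow_lt_zpow_iff_right₀ one_lt_p]

lemma supIdx_symm (x y : ℚ_[p]) : supIdx x y = supIdx y x := by
  unfold supIdx
  rw [show x - y = -(y - x) by ring]
  rcases eq_or_ne (y - x) 0 with h | h
  · rw [h]; simp
  · congr 1
    have h1 : ‖-(y-x)‖ = ‖y - x‖ := norm_neg _
    rw [Padic.norm_eq_zpow_neg_valuation h, Padic.norm_eq_zpow_neg_valuation (neg_ne_zero.2 h)] at h1
    have := zpow_right_injective₀ p_pos p_ne_one h1
    omega

variable [MeasurableSpace ℚ_[p]] [BorelSpace ℚ_[p]]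

lemma measurable_valuation : Measurable (Padic.valuation : ℚ_[p] → ℤ) := by
  apply measurable_to_countable'
  intro n
  have : (Padic.valuation ⁻¹' {n} : Set ℚ_[p])
      = (fun x : ℚ_[p] => ‖x‖) ⁻¹' {(p:ℝ)^(-n)} ∪ (if n = 0 then {0} else ∅) := by
    ext x
    rcases eq_or_ne x 0 with rfl | hx
    · simp only [Set.mem_preimage, Set.mem_singleton_iff, Padic.valuation_zero, norm_zero,
        Set.mem_union]
      constructor
      · rintro rfl; right; simp
      · rintro (h | h)
        · exact absurd h.symm (zpow_pos p_pos _).ne'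
        · split at h <;> simp_all
    · simp only [Set.mem_preimage, Set.mem_singleton_iff, Set.mem_union,
        Padic.norm_eq_zpow_neg_valuation hx]
      constructor
      · rintro rfl; left; rfl
      · rintro (h | h)
        · have := zpow_right_injective₀ p_pos p_ne_one h
          omega
        · split at h <;> simp_all
  rw [this]
  apply MeasurableSet.union
  · exact measurable_norm (measurableSet_singleton _)
  · split <;> simp

lemma measurable_supIdx2 : Measurable (fun q : ℚ_[p] × ℚ_[p] => supIdx q.1 q.2) :=
  (measurable_valuation.comp (measurable_fst.sub measurable_snd)).neg

lemma measurable_supIdx (x : ℚ_[p]) : Measurable (fun ξ : ℚ_[p] => supIdx x ξ) :=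
  (measurable_valuation.comp (measurable_const.sub measurable_id)).neg

lemma measurable_sup3Idx2 (x : ℚ_[p]) :
    Measurable (fun q : ℚ_[p] × ℚ_[p] => sup3Idx x q.1 q.2) := by
  unfold sup3Idx
  exact ((measurable_supIdx x).comp measurable_fst).max
    ((((measurable_supIdx x).comp measurable_snd)).max measurable_supIdx2)

lemma measurable_int_comp {α : Type*} (g : ℤ → α) [MeasurableSpace α] {β : Type*}
    [MeasurableSpace β] {f : β → ℤ} (hf : Measurable f) : Measurable (g ∘ f) :=
  (measurable_from_top).comp hf

lemma dist_ultra (x y z : ℚ_[p]) : dist x z ≤ max (dist x y) (dist y z) :=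
  IsUltrametricDist.dist_triangle_max x y z

-- representative points
noncomputable def rep (c : ℚ_[p]) (Γ : ℤ) (k : ℕ) : ℚ_[p] := c + (k : ℚ_[p]) * (p:ℚ_[p])^(-Γ)

lemma rep_mem (c : ℚ_[p]) (Γ : ℤ) {m k : ℕ} (hk : k < p ^ m) :
    rep c Γ k ∈ Metric.closedBall c ((p:ℝ)^Γ) := by
  rw [Metric.mem_closedBall, dist_eq_norm, rep]
  have : c + (k : ℚ_[p]) * (p:ℚ_[p])^(-Γ) - c = (k : ℚ_[p]) * (p:ℚ_[p])^(-Γ) := by ring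
  rw [this, norm_mul, Padic.norm_p_zpow, neg_neg]
  calc ‖(k : ℚ_[p])‖ * (p:ℝ)^Γ ≤ 1 * (p:ℝ)^Γ := by
        apply mul_le_mul_of_nonneg_right _ (le_of_lt (zpow_pos (by exact_mod_cast hp.out.pos) _))
        exact_mod_cast Padic.norm_int_le_one (k : ℤ)
    _ = (p:ℝ)^Γ := one_mul _

lemma rep_cover {c y : ℚ_[p]} {Γ : ℤ} (hy : y ∈ Metric.closedBall c ((p:ℝ)^Γ)) (m : ℕ) :
    ∃ k < p ^ m, dist y (rep c Γ k) ≤ (p:ℝ)^(Γ - m) := by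
  rw [Metric.mem_closedBall, dist_eq_norm] at hy
  have hz : ‖(y - c) * (p:ℚ_[p])^Γ‖ ≤ 1 := by
    rw [norm_mul, Padic.norm_p_zpow]
    calc ‖y - c‖ * (p:ℝ)^(-Γ) ≤ (p:ℝ)^Γ * (p:ℝ)^(-Γ) := by
          apply mul_le_mul_of_nonneg_right hy (le_of_lt (zpow_pos (by exact_mod_cast hp.out.pos) _))
      _ = 1 := by rw [← zpow_add₀ (by exact_mod_cast hp.out.pos.ne' : (p:ℝ) ≠ 0)]; simp
  set z : ℤ_[p] := ⟨(y - c) * (p:ℚ_[p])^Γ, hz⟩ with hzdef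
  refine ⟨z.appr m, z.appr_lt m, ?_⟩
  have hspec : ‖z - (z.appr m : ℤ_[p])‖ ≤ (p:ℝ)^(-(m:ℤ)) :=
    ((z - (z.appr m : ℤ_[p])).norm_le_pow_iff_mem_span_pow m).mpr (PadicInt.appr_spec m z)
  have hcoe : ‖((y - c) * (p:ℚ_[p])^Γ - (z.appr m : ℚ_[p]))‖ ≤ (p:ℝ)^(-(m:ℤ)) := by
    have : ((z - (z.appr m : ℤ_[p]) : ℤ_[p]) : ℚ_[p]) = (y - c) * (p:ℚ_[p])^Γ - (z.appr m : ℚ_[p]) := by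
      push_cast [hzdef, PadicInt.coe_sub]; ring_nf; rfl
    rw [← this]; exact hspec
  rw [dist_eq_norm, rep]
  have hne : (p:ℚ_[p]) ≠ 0 := by exact_mod_cast hp.out.ne_zero
  have hone : (p:ℚ_[p])^Γ * (p:ℚ_[p])^(-Γ) = 1 := by rw [← zpow_add₀ hne]; simp
  have key : y - (c + (z.appr m : ℚ_[p]) * (p:ℚ_[p])^(-Γ))
      = ((y - c) * (p:ℚ_[p])^Γ - (z.appr m : ℚ_[p])) * (p:ℚ_[p])^(-Γ) := by
    rw [sub_mul, mul_assoc, hone, mul_one]; ring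
  rw [key, norm_mul, Padic.norm_p_zpow, neg_neg]
  calc ‖_‖ * (p:ℝ)^Γ ≤ (p:ℝ)^(-(m:ℤ)) * (p:ℝ)^Γ := by
        apply mul_le_mul_of_nonneg_right hcoe (le_of_lt (zpow_pos (by exact_mod_cast hp.out.pos) _))
    _ = (p:ℝ)^(Γ - m) := by
        rw [← zpow_add₀ (by exact_mod_cast hp.out.pos.ne' : (p:ℝ) ≠ 0)]; ring_nf

lemma rep_sep {c : ℚ_[p]} {Γ : ℤ} {m j k : ℕ} (hj : j < p ^ m) (hk : k < p ^ m)
    (hjk : j ≠ k) : (p:ℝ)^(Γ - m) < dist (rep c Γ j) (rep c Γ k) := by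
  rw [dist_eq_norm, rep, rep]
  have : c + (j : ℚ_[p]) * (p:ℚ_[p])^(-Γ) - (c + (k : ℚ_[p]) * (p:ℚ_[p])^(-Γ))
      = (((j:ℤ) - (k:ℤ) : ℤ) : ℚ_[p]) * (p:ℚ_[p])^(-Γ) := by push_cast; ring
  rw [this, norm_mul, Padic.norm_p_zpow, neg_neg]
  have hcast : ((p:ℤ))^m = ((p^m : ℕ) : ℤ) := by push_cast; ring
  have hnd : ¬ ((p:ℤ)^m ∣ ((j:ℤ) - (k:ℤ))) := by
    intro h
    rcases lt_or_gt_of_ne hjk with h' | h'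
    · have := Int.le_of_dvd (by omega) ((dvd_neg).mpr h)
      omega
    · have := Int.le_of_dvd (by omega) h
      omega
  have hn : ¬ (‖(((j:ℤ) - (k:ℤ) : ℤ) : ℚ_[p])‖ ≤ (p:ℝ)^(-(m:ℤ))) := by
    rw [Padic.norm_int_le_pow_iff_dvd]; exact_mod_cast hnd
  push_neg at hn
  calc (p:ℝ)^(Γ-m) = (p:ℝ)^(-(m:ℤ)) * (p:ℝ)^Γ := by
        rw [← zpow_add₀ (by exact_mod_cast hp.out.pos.ne' : (p:ℝ) ≠ 0)]; ring_nf
    _ < _ := by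
        apply mul_lt_mul_of_pos_right hn (zpow_pos (by exact_mod_cast hp.out.pos) _)

variable (μ : Measure ℚ_[p]) [μ.IsAddHaarMeasure]

lemma measure_cb_translate (z : ℚ_[p]) (r : ℝ) :
    μ (Metric.closedBall z r) = μ (Metric.closedBall 0 r) := by
  have : Metric.closedBall z r = (fun x => -z + x) ⁻¹' (Metric.closedBall 0 r) := by
    ext x
    simp [Metric.mem_closedBall, dist_eq_norm, neg_add_eq_sub]
  rw [this, measure_preimage_add]

lemma measure_cb_ne_top (z : ℚ_[p]) (r : ℝ) : μ (Metric.closedBall z r) ≠ ⊤ :=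
  (MeasureTheory.measure_closedBall_lt_top (μ := μ)).ne

lemma ball_succ_eq (c : ℚ_[p]) (j : ℤ) :
    Metric.closedBall c ((p:ℝ)^(j+1))
      = ⋃ k ∈ Finset.range p, Metric.closedBall (rep c (j+1) k) ((p:ℝ)^j) := by
  ext x
  simp only [Set.mem_iUnion, Finset.mem_range, exists_prop]
  constructor
  · intro hx
    obtain ⟨k, hk, hd⟩ := rep_cover hx 1
    refine ⟨k, by simpa using hk, ?_⟩
    rw [Metric.mem_closedBall]
    convert hd using 2
    push_cast; ring
  · rintro ⟨k, hk, hd⟩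
    rw [Metric.mem_closedBall] at hd ⊢
    have h1 : dist (rep c (j+1) k) c ≤ (p:ℝ)^(j+1) :=
      rep_mem c (j+1) (m := 1) (by simpa using hk)
    refine le_trans (dist_ultra x (rep c (j+1) k) c) (max_le (le_trans hd ?_) h1)
    apply zpow_le_zpow_right₀ (by exact_mod_cast hp.out.one_le)
    omega

lemma measure_ball_succ (c : ℚ_[p]) (j : ℤ) :
    μ (Metric.closedBall c ((p:ℝ)^(j+1))) = p * μ (Metric.closedBall c ((p:ℝ)^j)) := by
  rw [ball_succ_eq c j]
  rw [measure_biUnion_finset ?disj (fun k _ => measurableSet_closedBall)]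
  case disj =>
    intro a ha b hb hab
    simp only [Finset.coe_range, Set.mem_Iio] at ha hb
    have hsep := rep_sep (c := c) (Γ := j+1) (m := 1) (by simpa using ha) (by simpa using hb) hab
    have : ((j:ℤ)+1) - ((1:ℕ):ℤ) = j := by push_cast; ring
    rw [this] at hsep
    refine Set.disjoint_left.mpr (fun w hw1 hw2 => ?_)
    rw [Metric.mem_closedBall] at hw1 hw2
    have := le_trans (dist_ultra (rep c (j+1) a) w (rep c (j+1) b))
      (max_le (by rwa [dist_comm] at hw1) hw2)
    exact absurd this (not_le.mpr hsep)
  have hconst : ∀ k ∈ Finset.range p, μ (Metric.closedBall (rep c (j+1) k) ((p:ℝ)^j))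
      = μ (Metric.closedBall c ((p:ℝ)^j)) := by
    intro k _
    rw [measure_cb_translate μ, measure_cb_translate μ c]
  rw [Finset.sum_congr rfl hconst, Finset.sum_const, Finset.card_range, nsmul_eq_mul]

lemma measure_ball_add_nat (c : ℚ_[p]) (Γ : ℤ) (n : ℕ) :
    μ (Metric.closedBall c ((p:ℝ)^(Γ + n))) = (p:ℝ≥0∞)^n * μ (Metric.closedBall c ((p:ℝ)^Γ)) := by
  induction n with
  | zero => simp
  | succ n ih =>
      have h2 : (Γ + ((n:ℕ)+1:ℕ) : ℤ) = (Γ + n) + 1 := by push_cast; ring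
      rw [h2, measure_ball_succ, ih, pow_succ]
      ring


-- shells
noncomputable def shell (c : ℚ_[p]) (Γ : ℤ) (n : ℕ) : Set ℚ_[p] :=
  Metric.closedBall c ((p:ℝ)^(Γ + 1 + n)) \ Metric.closedBall c ((p:ℝ)^(Γ + n))

lemma shell_measurableSet (c : ℚ_[p]) (Γ : ℤ) (n : ℕ) : MeasurableSet (shell c Γ n) :=
  measurableSet_closedBall.diff measurableSet_closedBall

lemma shell_disjoint (c : ℚ_[p]) (Γ : ℤ) : Pairwise (Function.onFun Disjoint (shell c Γ)) := by
  have key : ∀ m n : ℕ, m < n → Disjoint (shell c Γ m) (shell c Γ n) := by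
    intro m n hmn
    refine Set.disjoint_left.mpr (fun w hw1 hw2 => ?_)
    obtain ⟨h1, -⟩ := hw1
    obtain ⟨-, h2⟩ := hw2
    apply h2
    refine Metric.closedBall_subset_closedBall ?_ h1
    apply zpow_le_zpow_right₀ (by exact_mod_cast hp.out.one_le)
    omega
  intro m n hmn
  rcases lt_or_gt_of_ne hmn with h | h
  · exact key m n h
  · exact (key n m h).symm

lemma compl_ball_eq_iUnion_shell (c : ℚ_[p]) (Γ : ℤ) :
    (Metric.closedBall c ((p:ℝ)^Γ))ᶜ = ⋃ n, shell c Γ n := by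
  ext η
  simp only [Set.mem_compl_iff, Metric.mem_closedBall, not_le, Set.mem_iUnion]
  constructor
  · intro hd
    have hne : η ≠ c := by
      rintro rfl
      simp only [dist_self] at hd
      exact absurd hd (not_lt.mpr (le_of_lt (zpow_pos p_pos _)))
    have hdist : dist η c = (p:ℝ)^(supIdx η c) := dist_eq_pow_supIdx hne
    set J := supIdx η c with hJ
    have hJΓ : Γ < J := (lt_supIdx_iff hne).mpr hd
    refine ⟨(J - Γ - 1).toNat, ?_, ?_⟩
    · rw [Metric.mem_closedBall, hdist]
      apply zpow_le_zpow_right₀ (le_of_lt one_lt_p)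
      omega
    · rw [Metric.mem_closedBall, hdist, not_le]
      apply zpow_lt_zpow_right₀ one_lt_p
      omega
  · rintro ⟨n, h1, h2⟩
    rw [Metric.mem_closedBall, not_le] at h2
    refine lt_of_le_of_lt ?_ h2
    apply zpow_le_zpow_right₀ (le_of_lt one_lt_p)
    omega

lemma supIdx_eq_on_shell {c : ℚ_[p]} {Γ : ℤ} {n : ℕ} {η : ℚ_[p]} (h : η ∈ shell c Γ n) :
    supIdx c η = Γ + 1 + n := by
  obtain ⟨h1, h2⟩ := h
  rw [Metric.mem_closedBall] at h1
  rw [Metric.mem_closedBall, not_le] at h2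
  have hne : η ≠ c := by
    rintro rfl
    simp only [dist_self] at h2
    exact absurd h2 (not_lt.mpr (le_of_lt (zpow_pos p_pos _)))
  have hdist : dist η c = (p:ℝ)^(supIdx η c) := dist_eq_pow_supIdx hne
  rw [supIdx_symm]
  rw [hdist] at h1 h2
  have hle : supIdx η c ≤ Γ + 1 + n := by
    rw [← zpow_le_zpow_iff_right₀ (one_lt_p (p := p))]; exact h1
  have hgt : Γ + (n:ℤ) < supIdx η c := by
    rw [← zpow_lt_zpow_iff_right₀ (one_lt_p (p := p))]; exact h2
  omega

lemma measure_shell (c : ℚ_[p]) (Γ : ℤ) (n : ℕ) :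
    μ (shell c Γ n) ≤ (p:ℝ≥0∞)^(n+1) * μ (Metric.closedBall c ((p:ℝ)^Γ)) := by
  refine le_trans (measure_mono Set.diff_subset) ?_
  have : (Γ + 1 + (n:ℤ)) = Γ + ((n+1 : ℕ) : ℤ) := by push_cast; ring
  rw [this, measure_ball_add_nat]

/-- Tail integrability of a summable ball kernel outside a ball. -/
lemma tail_integrable (c : ℚ_[p]) (Γ : ℤ) (a : ℤ → ℝ) (ha : ∀ j, 0 ≤ a j)
    (hs : Summable (fun n : ℕ => a (Γ + 1 + n) * ((p:ℝ)^(Γ + 1 + (n:ℤ)) - (p:ℝ)^(Γ + (n:ℤ))))) :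
    IntegrableOn (fun η => a (supIdx c η)) (Metric.closedBall c ((p:ℝ)^Γ))ᶜ μ := by
  have hmeas : Measurable (fun η : ℚ_[p] => a (supIdx c η)) :=
    measurable_from_top.comp (measurable_supIdx c)
  constructor
  · exact hmeas.aestronglyMeasurable.restrict
  · rw [hasFiniteIntegral_iff_norm]
    calc ∫⁻ η in (Metric.closedBall c ((p:ℝ)^Γ))ᶜ, ENNReal.ofReal ‖a (supIdx c η)‖ ∂μ
        = ∑' n : ℕ, ∫⁻ η in shell c Γ n, ENNReal.ofReal ‖a (supIdx c η)‖ ∂μ := by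
          rw [compl_ball_eq_iUnion_shell, lintegral_iUnion (shell_measurableSet c Γ)
            (shell_disjoint c Γ)]
      _ ≤ ∑' n : ℕ, ENNReal.ofReal (a (Γ + 1 + n)) * μ (shell c Γ n) := by
          apply ENNReal.tsum_le_tsum
          intro n
          have : ∀ η ∈ shell c Γ n,
              ENNReal.ofReal ‖a (supIdx c η)‖ = ENNReal.ofReal (a (Γ + 1 + n)) := by
            intro η hη
            rw [supIdx_eq_on_shell hη, Real.norm_of_nonneg (ha _)]
          rw [setLIntegral_congr_fun (shell_measurableSet c Γ n) this,
            setLIntegral_const]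
      _ ≤ ∑' n : ℕ, ENNReal.ofReal (a (Γ + 1 + n) * ((p:ℝ)^(Γ + 1 + (n:ℤ)) - (p:ℝ)^(Γ + (n:ℤ))))
            * (μ (Metric.closedBall c ((p:ℝ)^Γ)) * ENNReal.ofReal ((p:ℝ)^(1 - Γ) / ((p:ℝ) - 1))) := by
          apply ENNReal.tsum_le_tsum
          intro n
          refine le_trans (mul_le_mul_right (measure_shell μ c Γ n) _) ?_
          have hp1 : (0:ℝ) < (p:ℝ) - 1 := by have := one_lt_p (p := p); linarith
          have hΔ : (0:ℝ) ≤ (p:ℝ)^(Γ + 1 + (n:ℤ)) - (p:ℝ)^(Γ + (n:ℤ)) := by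
            have : (p:ℝ)^(Γ + (n:ℤ)) ≤ (p:ℝ)^(Γ + 1 + (n:ℤ)) := by
              apply zpow_le_zpow_right₀ (le_of_lt (one_lt_p (p := p))); omega
            linarith
          have hq : (0:ℝ) ≤ (p:ℝ)^(1 - Γ) / ((p:ℝ) - 1) :=
            div_nonneg (le_of_lt (zpow_pos p_pos _)) (le_of_lt hp1)
          have harith : ((p:ℝ)^(Γ + 1 + (n:ℤ)) - (p:ℝ)^(Γ + (n:ℤ))) * ((p:ℝ)^(1 - Γ) / ((p:ℝ) - 1))
              = (p:ℝ)^(n+1 : ℕ) := by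
            have h1 : (p:ℝ)^(Γ + 1 + (n:ℤ)) - (p:ℝ)^(Γ + (n:ℤ)) = (p:ℝ)^(Γ + (n:ℤ)) * ((p:ℝ) - 1) := by
              rw [mul_sub, mul_one, ← zpow_add_one₀ (ne_of_gt (p_pos (p := p)))]
              ring_nf
            rw [h1, mul_assoc, mul_div_cancel₀ _ (ne_of_gt hp1),
              ← zpow_add₀ (ne_of_gt (p_pos (p := p))), ← zpow_natCast (p:ℝ) (n+1)]
            congr 1
            push_cast; ring
          have e3 : ((p:ℕ):ℝ≥0∞)^(n+1)
              = ENNReal.ofReal ((p:ℝ)^(Γ + 1 + (n:ℤ)) - (p:ℝ)^(Γ + (n:ℤ)))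
                * ENNReal.ofReal ((p:ℝ)^(1 - Γ) / ((p:ℝ) - 1)) := by
            rw [← ENNReal.ofReal_mul hΔ, harith, ENNReal.ofReal_pow (by positivity),
              ENNReal.ofReal_natCast]
          rw [e3, ENNReal.ofReal_mul (ha _)]
          apply le_of_eq
          ring
      _ < ⊤ := by
          rw [ENNReal.tsum_mul_right]
          apply ENNReal.mul_lt_top
          · rw [← ENNReal.ofReal_tsum_of_nonneg (fun n => ?_) hs]
            · exact ENNReal.ofReal_lt_top
            · have h1 : (p:ℝ)^(Γ + (n:ℤ)) ≤ (p:ℝ)^(Γ + 1 + (n:ℤ)) := by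
                apply zpow_le_zpow_right₀ (le_of_lt one_lt_p); omega
              have := ha (Γ + 1 + n)
              nlinarith
          · exact ENNReal.mul_lt_top (measure_cb_ne_top μ c _).lt_top ENNReal.ofReal_lt_top


-- geometry helpers
lemma supIdx_le_of_mem {c x ξ : ℚ_[p]} {Γ : ℤ} (hx : dist x c ≤ (p:ℝ)^Γ)
    (hξ : dist ξ c ≤ (p:ℝ)^Γ) (hΓ : 0 ≤ Γ) : supIdx x ξ ≤ Γ := by
  rcases eq_or_ne x ξ with rfl | hne
  · unfold supIdx; simp [Padic.valuation_zero]; omega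
  · rw [supIdx_le_iff hne]
    exact le_trans (dist_ultra x c ξ) (max_le hx (by rwa [dist_comm]))

lemma sup3Idx_le_of_mem {c x ξ η : ℚ_[p]} {Γ : ℤ} (hx : dist x c ≤ (p:ℝ)^Γ)
    (hξ : dist ξ c ≤ (p:ℝ)^Γ) (hη : dist η c ≤ (p:ℝ)^Γ) (hΓ : 0 ≤ Γ) :
    sup3Idx x ξ η ≤ Γ :=
  max_le (supIdx_le_of_mem hx hξ hΓ)
    (max_le (supIdx_le_of_mem hx hη hΓ) (supIdx_le_of_mem hξ hη hΓ))

lemma le_sup3Idx_of_far {x ξ η : ℚ_[p]} {γ : ℤ} (h : (p:ℝ)^γ < dist x η) :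
    γ + 1 ≤ sup3Idx x ξ η := by
  have hne : x ≠ η := by
    rintro rfl; simp only [dist_self] at h
    exact absurd h (not_lt.mpr (le_of_lt (zpow_pos p_pos _)))
  have h1 : γ + 1 ≤ supIdx x η := (lt_supIdx_iff hne).mpr h
  exact le_trans h1 (le_max_of_le_right (le_max_left _ _))

lemma dist_of_far {c u η : ℚ_[p]} {Γ : ℤ} (hu : dist u c ≤ (p:ℝ)^Γ)
    (hη : (p:ℝ)^Γ < dist η c) : dist u η = dist η c := by
  have h1 : dist u η ≤ dist η c := by
    refine le_trans (dist_ultra u c η) (max_le (le_of_lt (lt_of_le_of_lt hu hη)) ?_)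
    rw [dist_comm]
  have h2 : dist η c ≤ dist u η := by
    by_contra hcon
    push_neg at hcon
    have h3 : dist η c ≤ max (dist η u) (dist u c) := dist_ultra η u c
    rw [dist_comm η u] at h3
    exact absurd (lt_of_le_of_lt h3 (max_lt hcon (lt_of_le_of_lt hu hη))) (lt_irrefl _)
  linarith

lemma supIdx_of_far {c u η : ℚ_[p]} {Γ : ℤ} (hu : dist u c ≤ (p:ℝ)^Γ)
    (hη : (p:ℝ)^Γ < dist η c) : supIdx u η = supIdx c η := by
  have hpos : (0:ℝ) < dist η c := lt_trans (zpow_pos p_pos _) hη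
  have hne1 : u ≠ η := by
    rintro rfl
    exact absurd hη (not_lt.mpr hu)
  have hne2 : c ≠ η := by rintro rfl; simp at hpos
  have hd : dist u η = dist c η := by rw [dist_of_far hu hη, dist_comm]
  have := dist_eq_pow_supIdx hne1
  rw [hd, dist_eq_pow_supIdx hne2] at this
  exact zpow_right_injective₀ p_pos p_ne_one this.symm

lemma sup3Idx_of_far {c x ξ η : ℚ_[p]} {Γ : ℤ} (hx : dist x c ≤ (p:ℝ)^Γ)
    (hξ : dist ξ c ≤ (p:ℝ)^Γ) (hη : (p:ℝ)^Γ < dist η c) (hΓ : 0 ≤ Γ) :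
    sup3Idx x ξ η = supIdx c η := by
  have h1 : supIdx x η = supIdx c η := supIdx_of_far hx hη
  have h2 : supIdx ξ η = supIdx c η := supIdx_of_far hξ hη
  have h3 : supIdx x ξ ≤ Γ := supIdx_le_of_mem hx hξ hΓ
  have h4 : Γ < supIdx c η := by
    have hne2 : c ≠ η := by
      rintro rfl
      simp only [dist_self] at hη
      exact absurd hη (not_lt.mpr (le_of_lt (zpow_pos p_pos _)))
    rw [supIdx_symm]
    exact (lt_supIdx_iff (Ne.symm hne2)).mpr hη
  unfold sup3Idx
  rw [h1, h2]
  omega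

lemma continuous_of_const_on_balls {f : ℚ_[p] → ℂ} {γ : ℤ}
    (hfc : ∀ z y : ℚ_[p], dist z y ≤ (p:ℝ)^γ → f z = f y) : Continuous f := by
  rw [continuous_def]
  intro s _
  rw [Metric.isOpen_iff]
  intro z hz
  refine ⟨(p:ℝ)^γ, zpow_pos p_pos _, fun y hy => ?_⟩
  simp only [Set.mem_preimage] at hz ⊢
  rw [hfc y z (le_of_lt (by rwa [Metric.mem_ball] at hy))]
  exact hz


section Est
variable (c : ℚ_[p]) (γ Γ : ℤ)

/-- Majorant kernel: constant on the big ball, tail outside. -/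
noncomputable def maj (a : ℤ → ℝ) : ℚ_[p] → ℝ := fun η =>
  if dist η c ≤ (p:ℝ)^Γ then (∑ j ∈ Finset.Icc (γ+1) Γ, a j) else a (supIdx c η)

variable {c γ Γ}

lemma maj_nonneg {a : ℤ → ℝ} (ha : ∀ j, 0 ≤ a j) (η : ℚ_[p]) : 0 ≤ maj c γ Γ a η := by
  unfold maj
  split
  · exact Finset.sum_nonneg (fun j _ => ha j)
  · exact ha _

lemma maj_measurable [MeasurableSpace ℚ_[p]] [BorelSpace ℚ_[p]] (a : ℤ → ℝ) :
    Measurable (maj c γ Γ a) := by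
  unfold maj
  have hset : MeasurableSet {η : ℚ_[p] | dist η c ≤ (p:ℝ)^Γ} := by
    have : {η : ℚ_[p] | dist η c ≤ (p:ℝ)^Γ} = Metric.closedBall c ((p:ℝ)^Γ) := rfl
    rw [this]; exact measurableSet_closedBall
  exact Measurable.ite hset measurable_const
    (measurable_from_top.comp (measurable_supIdx c))

lemma maj_integrable [MeasurableSpace ℚ_[p]] [BorelSpace ℚ_[p]] (μ : Measure ℚ_[p])
    [μ.IsAddHaarMeasure] (a : ℤ → ℝ) (ha : ∀ j, 0 ≤ a j)
    (hs : Summable (fun n : ℕ => a (Γ + 1 + n) * ((p:ℝ)^(Γ + 1 + (n:ℤ)) - (p:ℝ)^(Γ + (n:ℤ))))) :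
    Integrable (maj c γ Γ a) μ := by
  have heq : maj c γ Γ a = (Metric.closedBall c ((p:ℝ)^Γ)).indicator
        (fun _ => ∑ j ∈ Finset.Icc (γ+1) Γ, a j)
      + ((Metric.closedBall c ((p:ℝ)^Γ))ᶜ).indicator (fun η => a (supIdx c η)) := by
    funext η
    by_cases h : dist η c ≤ (p:ℝ)^Γ
    · simp [maj, h, Set.indicator_of_mem (Metric.mem_closedBall.mpr h),
        Set.indicator_of_notMem (by simpa [Metric.mem_closedBall] using h :
          η ∉ (Metric.closedBall c ((p:ℝ)^Γ))ᶜ)]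
    · simp [maj, h, Set.indicator_of_notMem (by simpa [Metric.mem_closedBall] using h :
          η ∉ Metric.closedBall c ((p:ℝ)^Γ)),
        Set.indicator_of_mem (by simpa [Metric.mem_closedBall] using h :
          η ∈ (Metric.closedBall c ((p:ℝ)^Γ))ᶜ)]
  rw [heq]
  apply Integrable.add
  · rw [integrable_indicator_iff measurableSet_closedBall]
    exact integrableOn_const (measure_closedBall_lt_top).ne
  · rw [integrable_indicator_iff measurableSet_closedBall.compl]
    exact tail_integrable μ c Γ a ha hs

lemma single_le_sum_mem {a : ℤ → ℝ} (ha : ∀ j, 0 ≤ a j) {s : ℤ} (h1 : γ + 1 ≤ s) (h2 : s ≤ Γ) :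
    a s ≤ ∑ j ∈ Finset.Icc (γ+1) Γ, a j :=
  Finset.single_le_sum (fun j _ => ha j) (Finset.mem_Icc.mpr ⟨h1, h2⟩)

variable {x : ℚ_[p]} (F G : ℚ_[p] → ℤ → ℂ)
variable {f g : ℚ_[p] → ℂ} {M δ : ℝ}

/-- Pointwise bound for the quadratic (F) part. -/
lemma keyF (hΓ0 : 0 ≤ Γ) (hx : dist x c ≤ (p:ℝ)^Γ)
    (hfz : ∀ z, (p:ℝ)^Γ < dist z c → f z = 0) (hgz : ∀ z, (p:ℝ)^Γ < dist z c → g z = 0)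
    (hfc : ∀ z y, dist z y ≤ (p:ℝ)^γ → f z = f y) (hgc : ∀ z y, dist z y ≤ (p:ℝ)^γ → g z = g y)
    (hfM : ∀ z, ‖f z‖ ≤ M) (hgM : ∀ z, ‖g z‖ ≤ M) (hδ : ∀ z, ‖f z - g z‖ ≤ δ)
    (ξ η : ℚ_[p]) :
    ‖F x (sup3Idx x ξ η) * (f ξ * (f η - f x)) - F x (sup3Idx x ξ η) * (g ξ * (g η - g x))‖
      ≤ (4*M*δ) * (if dist ξ c ≤ (p:ℝ)^Γ then maj c γ Γ (fun j => ‖F x j‖) η else 0) := by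
  have hM0 : 0 ≤ M := le_trans (norm_nonneg _) (hfM x)
  have hδ0 : 0 ≤ δ := le_trans (norm_nonneg _) (hδ x)
  have hmaj0 : 0 ≤ maj c γ Γ (fun j => ‖F x j‖) η := maj_nonneg (fun j => norm_nonneg _) η
  by_cases hξ : dist ξ c ≤ (p:ℝ)^Γ
  swap
  · rw [if_neg hξ, hfz ξ (not_le.mp hξ), hgz ξ (not_le.mp hξ)]
    simp
  rw [if_pos hξ]
  by_cases hxη : dist η x ≤ (p:ℝ)^γ
  · rw [hfc η x hxη, hgc η x hxη]
    simp
    positivity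
  push_neg at hxη
  rw [dist_comm] at hxη
  have hT : ‖f ξ * (f η - f x) - g ξ * (g η - g x)‖ ≤ 4*(M*δ) := by
    have hre : f ξ * (f η - f x) - g ξ * (g η - g x)
        = (f ξ - g ξ) * (f η - f x) + g ξ * ((f η - g η) - (f x - g x)) := by ring
    rw [hre]
    refine le_trans (norm_add_le _ _) ?_
    rw [norm_mul, norm_mul]
    have b1 : ‖f η - f x‖ ≤ M + M := le_trans (norm_sub_le _ _) (add_le_add (hfM _) (hfM _))
    have b2 : ‖(f η - g η) - (f x - g x)‖ ≤ δ + δ :=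
      le_trans (norm_sub_le _ _) (add_le_add (hδ _) (hδ _))
    have c1 : ‖f ξ - g ξ‖ * ‖f η - f x‖ ≤ δ * (M + M) :=
      mul_le_mul (hδ _) b1 (norm_nonneg _) hδ0
    have c2 : ‖g ξ‖ * ‖(f η - g η) - (f x - g x)‖ ≤ M * (δ + δ) :=
      mul_le_mul (hgM _) b2 (norm_nonneg _) hM0
    nlinarith [c1, c2]
  have hFb : ‖F x (sup3Idx x ξ η)‖ ≤ maj c γ Γ (fun j => ‖F x j‖) η := by
    by_cases hη : dist η c ≤ (p:ℝ)^Γ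
    · rw [maj, if_pos hη]
      exact single_le_sum_mem (fun j => norm_nonneg _) (le_sup3Idx_of_far hxη)
        (sup3Idx_le_of_mem hx hξ hη hΓ0)
    · rw [maj, if_neg hη, sup3Idx_of_far hx hξ (not_le.mp hη) hΓ0]
  calc ‖F x (sup3Idx x ξ η) * (f ξ * (f η - f x)) - F x (sup3Idx x ξ η) * (g ξ * (g η - g x))‖
      = ‖F x (sup3Idx x ξ η)‖ * ‖f ξ * (f η - f x) - g ξ * (g η - g x)‖ := by
        rw [← mul_sub, norm_mul]
    _ ≤ (maj c γ Γ (fun j => ‖F x j‖) η) * (4*(M*δ)) :=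
        mul_le_mul hFb hT (norm_nonneg _) hmaj0
    _ = (4*M*δ) * maj c γ Γ (fun j => ‖F x j‖) η := by ring

/-- Pointwise bound for the linear (G) part. -/
lemma keyG (hΓ0 : 0 ≤ Γ) (hx : dist x c ≤ (p:ℝ)^Γ)
    (hfc : ∀ z y, dist z y ≤ (p:ℝ)^γ → f z = f y) (hgc : ∀ z y, dist z y ≤ (p:ℝ)^γ → g z = g y)
    (hδ : ∀ z, ‖f z - g z‖ ≤ δ)
    (ξ : ℚ_[p]) :
    ‖G x (supIdx x ξ) * (f x - f ξ) - G x (supIdx x ξ) * (g x - g ξ)‖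
      ≤ (2*δ) * maj c γ Γ (fun j => ‖G x j‖) ξ := by
  have hδ0 : 0 ≤ δ := le_trans (norm_nonneg _) (hδ x)
  have hmaj0 : 0 ≤ maj c γ Γ (fun j => ‖G x j‖) ξ := maj_nonneg (fun j => norm_nonneg _) ξ
  by_cases hxξ : dist ξ x ≤ (p:ℝ)^γ
  · rw [hfc ξ x hxξ, hgc ξ x hxξ]
    simp
    positivity
  push_neg at hxξ
  rw [dist_comm] at hxξ
  have hT : ‖(f x - f ξ) - (g x - g ξ)‖ ≤ 2*δ := by
    have : (f x - f ξ) - (g x - g ξ) = (f x - g x) - (f ξ - g ξ) := by ring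
    rw [this]
    refine le_trans (norm_sub_le _ _) ?_
    have := hδ x; have := hδ ξ
    linarith
  have hGb : ‖G x (supIdx x ξ)‖ ≤ maj c γ Γ (fun j => ‖G x j‖) ξ := by
    by_cases hξ : dist ξ c ≤ (p:ℝ)^Γ
    · rw [maj, if_pos hξ]
      have hne : x ≠ ξ := by
        rintro rfl; simp only [dist_self] at hxξ
        exact absurd hxξ (not_lt.mpr (le_of_lt (zpow_pos p_pos _)))
      exact single_le_sum_mem (fun j => norm_nonneg _) ((lt_supIdx_iff hne).mpr hxξ)
        (supIdx_le_of_mem hx hξ hΓ0)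
    · rw [maj, if_neg hξ, supIdx_of_far hx (not_le.mp hξ)]
  calc ‖G x (supIdx x ξ) * (f x - f ξ) - G x (supIdx x ξ) * (g x - g ξ)‖
      = ‖G x (supIdx x ξ)‖ * ‖(f x - f ξ) - (g x - g ξ)‖ := by rw [← mul_sub, norm_mul]
    _ ≤ (maj c γ Γ (fun j => ‖G x j‖) ξ) * (2*δ) := mul_le_mul hGb hT (norm_nonneg _) hmaj0
    _ = (2*δ) * maj c γ Γ (fun j => ‖G x j‖) ξ := mul_comm _ _

end Est



section Diff
variable [MeasurableSpace ℚ_[p]] [BorelSpace ℚ_[p]] (μ : Measure ℚ_[p]) [μ.IsAddHaarMeasure]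
variable {c x : ℚ_[p]} {γ Γ : ℤ} (F G : ℚ_[p] → ℤ → ℂ)
variable {f g : ℚ_[p] → ℂ} {M δ : ℝ}

lemma cascadeOp_diff_bound (hΓ0 : 0 ≤ Γ) (hx : dist x c ≤ (p:ℝ)^Γ)
    (hFs : Summable (fun n : ℕ =>
      ‖F x (Γ + 1 + n)‖ * ((p:ℝ)^(Γ + 1 + (n:ℤ)) - (p:ℝ)^(Γ + (n:ℤ)))))
    (hGs : Summable (fun n : ℕ =>
      ‖G x (Γ + 1 + n)‖ * ((p:ℝ)^(Γ + 1 + (n:ℤ)) - (p:ℝ)^(Γ + (n:ℤ)))))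
    (hfz : ∀ z, (p:ℝ)^Γ < dist z c → f z = 0) (hgz : ∀ z, (p:ℝ)^Γ < dist z c → g z = 0)
    (hfc : ∀ z y, dist z y ≤ (p:ℝ)^γ → f z = f y) (hgc : ∀ z y, dist z y ≤ (p:ℝ)^γ → g z = g y)
    (hfM : ∀ z, ‖f z‖ ≤ M) (hgM : ∀ z, ‖g z‖ ≤ M) (hδ : ∀ z, ‖f z - g z‖ ≤ δ) :
    ‖cascadeOp μ F G f x - cascadeOp μ F G g x‖
      ≤ (4*M*((μ (Metric.closedBall c ((p:ℝ)^Γ))).toReal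
            * (∫ η, maj c γ Γ (fun j => ‖F x j‖) η ∂μ))
         + 2*(∫ η, maj c γ Γ (fun j => ‖G x j‖) η ∂μ)) * δ := by
  classical
  have hM0 : 0 ≤ M := le_trans (norm_nonneg _) (hfM x)
  have hδ0 : 0 ≤ δ := le_trans (norm_nonneg _) (hδ x)
  have hf_cont : Continuous f := continuous_of_const_on_balls hfc
  have hg_cont : Continuous g := continuous_of_const_on_balls hgc
  set aF : ℤ → ℝ := fun j => ‖F x j‖ with haF
  set aG : ℤ → ℝ := fun j => ‖G x j‖ with haG
  have haF0 : ∀ j, 0 ≤ aF j := fun j => norm_nonneg _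
  have haG0 : ∀ j, 0 ≤ aG j := fun j => norm_nonneg _
  have hmajF_int : Integrable (maj c γ Γ aF) μ := maj_integrable μ aF haF0 hFs
  have hmajG_int : Integrable (maj c γ Γ aG) μ := maj_integrable μ aG haG0 hGs
  set IF : ℝ := ∫ η, maj c γ Γ aF η ∂μ with hIF
  set IG : ℝ := ∫ η, maj c γ Γ aG η ∂μ with hIG
  have hIF0 : 0 ≤ IF := integral_nonneg (maj_nonneg haF0)
  have hIG0 : 0 ≤ IG := integral_nonneg (maj_nonneg haG0)
  -- zero function facts
  have h0z : ∀ z : ℚ_[p], (p:ℝ)^Γ < dist z c → (fun _ : ℚ_[p] => (0:ℂ)) z = 0 := fun _ _ => rfl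
  have h0c : ∀ z y : ℚ_[p], dist z y ≤ (p:ℝ)^γ → (fun _ : ℚ_[p] => (0:ℂ)) z
      = (fun _ : ℚ_[p] => (0:ℂ)) y := fun _ _ _ => rfl
  have h0M : ∀ z : ℚ_[p], ‖(fun _ : ℚ_[p] => (0:ℂ)) z‖ ≤ M := fun _ => by simp [hM0]
  have hfM' : ∀ z, ‖f z - (fun _ : ℚ_[p] => (0:ℂ)) z‖ ≤ M := fun z => by simpa using hfM z
  have hgM' : ∀ z, ‖g z - (fun _ : ℚ_[p] => (0:ℂ)) z‖ ≤ M := fun z => by simpa using hgM z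
  ------------------------------------------------------------------ G part
  have hΨmeas : ∀ h : ℚ_[p] → ℂ, Continuous h →
      AEStronglyMeasurable (fun ξ => G x (supIdx x ξ) * (h x - h ξ)) μ := by
    intro h hc
    exact ((measurable_from_top.comp (measurable_supIdx x)).mul
      (measurable_const.sub hc.measurable)).aestronglyMeasurable
  have hΨf_bd : ∀ ξ, ‖G x (supIdx x ξ) * (f x - f ξ)‖ ≤ (2*M) * maj c γ Γ aG ξ := by
    intro ξ
    simpa using keyG (x := x) G hΓ0 hx hfc h0c hfM' ξ
  have hΨg_bd : ∀ ξ, ‖G x (supIdx x ξ) * (g x - g ξ)‖ ≤ (2*M) * maj c γ Γ aG ξ := by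
    intro ξ
    simpa using keyG (x := x) G hΓ0 hx hgc h0c hgM' ξ
  have hΨf_int : Integrable (fun ξ => G x (supIdx x ξ) * (f x - f ξ)) μ :=
    Integrable.mono' (hmajG_int.const_mul (2*M)) (hΨmeas f hf_cont)
      (Filter.Eventually.of_forall hΨf_bd)
  have hΨg_int : Integrable (fun ξ => G x (supIdx x ξ) * (g x - g ξ)) μ :=
    Integrable.mono' (hmajG_int.const_mul (2*M)) (hΨmeas g hg_cont)
      (Filter.Eventually.of_forall hΨg_bd)
  have hGdiff : ‖(∫ ξ, G x (supIdx x ξ) * (f x - f ξ) ∂μ)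
      - (∫ ξ, G x (supIdx x ξ) * (g x - g ξ) ∂μ)‖ ≤ (2*δ) * IG := by
    rw [← integral_sub hΨf_int hΨg_int]
    refine le_trans (norm_integral_le_of_norm_le (hmajG_int.const_mul (2*δ))
      (Filter.Eventually.of_forall (fun ξ => keyG (x := x) G hΓ0 hx hfc hgc hδ ξ))) ?_
    rw [integral_const_mul]
  ------------------------------------------------------------------ F part
  set mF : ℚ_[p] → ℚ_[p] → ℝ :=
    fun ξ η => if dist ξ c ≤ (p:ℝ)^Γ then maj c γ Γ aF η else 0 with hmF
  have hmF_int : ∀ ξ, Integrable (mF ξ) μ := by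
    intro ξ
    by_cases h : dist ξ c ≤ (p:ℝ)^Γ
    · simpa [hmF, h] using hmajF_int
    · simpa [hmF, h] using integrable_zero ℚ_[p] ℝ μ
  have hmF_intval : ∀ ξ, (∫ η, mF ξ η ∂μ) = if dist ξ c ≤ (p:ℝ)^Γ then IF else 0 := by
    intro ξ
    by_cases h : dist ξ c ≤ (p:ℝ)^Γ <;> simp [hmF, h, hIF]
  have hφmeas : ∀ h : ℚ_[p] → ℂ, Continuous h → Measurable
      (fun q : ℚ_[p] × ℚ_[p] => F x (sup3Idx x q.1 q.2) * (h q.1 * (h q.2 - h x))) := by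
    intro h hc
    exact (measurable_from_top.comp (measurable_sup3Idx2 x)).mul
      ((hc.measurable.comp measurable_fst).mul
        ((hc.measurable.comp measurable_snd).sub measurable_const))
  have hφf_bd : ∀ ξ η, ‖F x (sup3Idx x ξ η) * (f ξ * (f η - f x))‖ ≤ (4*M*M) * mF ξ η := by
    intro ξ η
    simpa [hmF] using keyF (x := x) F hΓ0 hx hfz h0z hfc h0c hfM h0M hfM' ξ η
  have hφg_bd : ∀ ξ η, ‖F x (sup3Idx x ξ η) * (g ξ * (g η - g x))‖ ≤ (4*M*M) * mF ξ η := by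
    intro ξ η
    simpa [hmF] using keyF (x := x) F hΓ0 hx hgz h0z hgc h0c hgM h0M hgM' ξ η
  have hφf_int_η : ∀ ξ, Integrable (fun η => F x (sup3Idx x ξ η) * (f ξ * (f η - f x))) μ := by
    intro ξ
    refine Integrable.mono' ((hmF_int ξ).const_mul (4*M*M)) ?_
      (Filter.Eventually.of_forall (fun η => hφf_bd ξ η))
    exact ((hφmeas f hf_cont).comp (measurable_prodMk_left)).aestronglyMeasurable
  have hφg_int_η : ∀ ξ, Integrable (fun η => F x (sup3Idx x ξ η) * (g ξ * (g η - g x))) μ := by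
    intro ξ
    refine Integrable.mono' ((hmF_int ξ).const_mul (4*M*M)) ?_
      (Filter.Eventually.of_forall (fun η => hφg_bd ξ η))
    exact ((hφmeas g hg_cont).comp (measurable_prodMk_left)).aestronglyMeasurable
  -- the inner integrals, as functions of ξ
  have hIf_meas : ∀ h : ℚ_[p] → ℂ, Continuous h → AEStronglyMeasurable
      (fun ξ => ∫ η, F x (sup3Idx x ξ η) * (h ξ * (h η - h x)) ∂μ) μ := by
    intro h hc
    exact ((hφmeas h hc).stronglyMeasurable.integral_prod_right').aestronglyMeasurable
  set ind : ℚ_[p] → ℝ := fun ξ => if dist ξ c ≤ (p:ℝ)^Γ then IF else 0 with hind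
  have hind_int : Integrable ind μ := by
    have : ind = (Metric.closedBall c ((p:ℝ)^Γ)).indicator (fun _ => IF) := by
      funext ξ
      by_cases h : dist ξ c ≤ (p:ℝ)^Γ
      · simp [hind, h, Set.indicator_of_mem (Metric.mem_closedBall.mpr h)]
      · simp [hind, h, Set.indicator_of_notMem (fun hc' => h (Metric.mem_closedBall.mp hc'))]
    rw [this, integrable_indicator_iff measurableSet_closedBall]
    exact integrableOn_const (measure_closedBall_lt_top).ne
  have hIf_bd : ∀ ξ, ‖∫ η, F x (sup3Idx x ξ η) * (f ξ * (f η - f x)) ∂μ‖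
      ≤ (4*M*M) * ind ξ := by
    intro ξ
    refine le_trans (norm_integral_le_of_norm_le ((hmF_int ξ).const_mul (4*M*M))
      (Filter.Eventually.of_forall (fun η => hφf_bd ξ η))) ?_
    rw [integral_const_mul, hmF_intval ξ]
  have hIg_bd : ∀ ξ, ‖∫ η, F x (sup3Idx x ξ η) * (g ξ * (g η - g x)) ∂μ‖
      ≤ (4*M*M) * ind ξ := by
    intro ξ
    refine le_trans (norm_integral_le_of_norm_le ((hmF_int ξ).const_mul (4*M*M))
      (Filter.Eventually.of_forall (fun η => hφg_bd ξ η))) ?_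
    rw [integral_const_mul, hmF_intval ξ]
  have hIf_int : Integrable (fun ξ => ∫ η, F x (sup3Idx x ξ η) * (f ξ * (f η - f x)) ∂μ) μ :=
    Integrable.mono' (hind_int.const_mul (4*M*M)) (hIf_meas f hf_cont)
      (Filter.Eventually.of_forall hIf_bd)
  have hIg_int : Integrable (fun ξ => ∫ η, F x (sup3Idx x ξ η) * (g ξ * (g η - g x)) ∂μ) μ :=
    Integrable.mono' (hind_int.const_mul (4*M*M)) (hIf_meas g hg_cont)
      (Filter.Eventually.of_forall hIg_bd)
  have hdiff_bd : ∀ ξ, ‖(∫ η, F x (sup3Idx x ξ η) * (f ξ * (f η - f x)) ∂μ)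
      - (∫ η, F x (sup3Idx x ξ η) * (g ξ * (g η - g x)) ∂μ)‖ ≤ (4*M*δ) * ind ξ := by
    intro ξ
    rw [← integral_sub (hφf_int_η ξ) (hφg_int_η ξ)]
    refine le_trans (norm_integral_le_of_norm_le ((hmF_int ξ).const_mul (4*M*δ))
      (Filter.Eventually.of_forall
        (fun η => keyF (x := x) F hΓ0 hx hfz hgz hfc hgc hfM hgM hδ ξ η))) ?_
    rw [integral_const_mul, hmF_intval ξ]
  have hint_ind : (∫ ξ, ind ξ ∂μ) = (μ (Metric.closedBall c ((p:ℝ)^Γ))).toReal * IF := by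
    have : ind = (Metric.closedBall c ((p:ℝ)^Γ)).indicator (fun _ => IF) := by
      funext ξ
      by_cases h : dist ξ c ≤ (p:ℝ)^Γ
      · simp [hind, h, Set.indicator_of_mem (Metric.mem_closedBall.mpr h)]
      · simp [hind, h, Set.indicator_of_notMem (fun hc' => h (Metric.mem_closedBall.mp hc'))]
    rw [this, integral_indicator_const _ measurableSet_closedBall]
    simp [smul_eq_mul, Measure.real]
  have hFdiff : ‖(∫ ξ, ∫ η, F x (sup3Idx x ξ η) * (f ξ * (f η - f x)) ∂μ ∂μ)
      - (∫ ξ, ∫ η, F x (sup3Idx x ξ η) * (g ξ * (g η - g x)) ∂μ ∂μ)‖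
      ≤ (4*M*δ) * ((μ (Metric.closedBall c ((p:ℝ)^Γ))).toReal * IF) := by
    rw [← integral_sub hIf_int hIg_int]
    refine le_trans (norm_integral_le_of_norm_le (hind_int.const_mul (4*M*δ))
      (Filter.Eventually.of_forall hdiff_bd)) ?_
    rw [integral_const_mul, hint_ind]
  ------------------------------------------------------------------ combine
  unfold cascadeOp
  have final : ‖((∫ ξ, ∫ η, F x (sup3Idx x ξ η) * (f ξ * (f η - f x)) ∂μ ∂μ)
        + ∫ ξ, G x (supIdx x ξ) * (f x - f ξ) ∂μ)
      - ((∫ ξ, ∫ η, F x (sup3Idx x ξ η) * (g ξ * (g η - g x)) ∂μ ∂μ)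
        + ∫ ξ, G x (supIdx x ξ) * (g x - g ξ) ∂μ)‖
      ≤ (4*M*δ) * ((μ (Metric.closedBall c ((p:ℝ)^Γ))).toReal * IF) + (2*δ) * IG := by
    have hre : ((∫ ξ, ∫ η, F x (sup3Idx x ξ η) * (f ξ * (f η - f x)) ∂μ ∂μ)
        + ∫ ξ, G x (supIdx x ξ) * (f x - f ξ) ∂μ)
      - ((∫ ξ, ∫ η, F x (sup3Idx x ξ η) * (g ξ * (g η - g x)) ∂μ ∂μ)
        + ∫ ξ, G x (supIdx x ξ) * (g x - g ξ) ∂μ)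
      = ((∫ ξ, ∫ η, F x (sup3Idx x ξ η) * (f ξ * (f η - f x)) ∂μ ∂μ)
        - (∫ ξ, ∫ η, F x (sup3Idx x ξ η) * (g ξ * (g η - g x)) ∂μ ∂μ))
        + ((∫ ξ, G x (supIdx x ξ) * (f x - f ξ) ∂μ)
          - (∫ ξ, G x (supIdx x ξ) * (g x - g ξ) ∂μ)) := by ring
    rw [hre]
    exact le_trans (norm_add_le _ _) (add_le_add hFdiff hGdiff)
  refine le_trans final (le_of_eq ?_)
  ring

end Diff

end CascadeAux

open CascadeAux

/-- Uniqueness of solutions of the Cauchy problem for the quadratic cascade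
equation with summable ball kernels `F`, `G`: two solutions `v`, `w` of class
`D_0(ℚ_p) ⊗ C¹([0,∞))` with the same initial condition coincide for all `x` and `t ≥ 0`. -/



theorem cascade_cauchy_uniqueness {p : ℕ} [Fact p.Prime]
    [MeasurableSpace ℚ_[p]] [BorelSpace ℚ_[p]]
    (μ : Measure ℚ_[p]) [μ.IsAddHaarMeasure] (hμ : μ (Metric.closedBall 0 1) = 1)
    (F G : ℚ_[p] → ℤ → ℂ) (hF : IsBallKernel F) (hG : IsBallKernel G)
    (hFs : KernelSummable F) (hGs : KernelSummable G)
    (v w : ℚ_[p] → ℝ → ℂ)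
    (hvD : ∃ (c₀ : ℚ_[p]) (γB γ₀ : ℤ), ∀ t : ℝ, 0 ≤ t →
        (∀ x, (p : ℝ) ^ γB < dist x c₀ → v x t = 0) ∧
        (∀ x y, dist x y ≤ (p : ℝ) ^ γ₀ → v x t = v y t) ∧
        (∫ x, v x t ∂μ) = 0)
    (hwD : ∃ (c₀ : ℚ_[p]) (γB γ₀ : ℤ), ∀ t : ℝ, 0 ≤ t →
        (∀ x, (p : ℝ) ^ γB < dist x c₀ → w x t = 0) ∧
        (∀ x y, dist x y ≤ (p : ℝ) ^ γ₀ → w x t = w y t) ∧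
        (∫ x, w x t ∂μ) = 0)
    (hvC : ∀ x, ContDiffOn ℝ 1 (fun t => v x t) (Set.Ici (0 : ℝ)))
    (hwC : ∀ x, ContDiffOn ℝ 1 (fun t => w x t) (Set.Ici (0 : ℝ)))
    (hveq : SatisfiesCascade μ F G v) (hweq : SatisfiesCascade μ F G w)
    (h0 : ∀ x, v x 0 = w x 0) :
    ∀ x : ℚ_[p], ∀ t : ℝ, 0 ≤ t → v x t = w x t := by
  classical
  obtain ⟨cv, γBv, γ0v, hv⟩ := hvD
  obtain ⟨cw, γBw, γ0w, hw⟩ := hwD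
  set γ : ℤ := min γ0v γ0w with hγdef
  set D : ℤ := if cv = cw then 0 else supIdx cv cw with hDdef
  set Γ : ℤ := max 0 (max γ (max γBv (max γBw D))) with hΓdef
  set c : ℚ_[p] := cv with hcdef
  have hΓ0 : 0 ≤ Γ := le_max_left _ _
  have hγΓ : γ ≤ Γ := le_trans (le_max_left γ _) (le_max_right 0 _)
  have hBvΓ : γBv ≤ Γ :=
    le_trans (le_trans (le_max_left _ _) (le_max_right γ _)) (le_max_right 0 _)
  have hBwΓ : γBw ≤ Γ :=
    le_trans (le_trans (le_trans (le_max_left _ _) (le_max_right γBv _)) (le_max_right γ _))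
      (le_max_right 0 _)
  have hDΓ : D ≤ Γ :=
    le_trans (le_trans (le_trans (le_max_right _ _) (le_max_right γBv _)) (le_max_right γ _))
      (le_max_right 0 _)
  have hple : (1:ℝ) ≤ p := le_of_lt one_lt_p
  have hcw : dist cw c ≤ (p:ℝ)^Γ := by
    rw [dist_comm]
    by_cases hc : cv = cw
    · rw [hcdef, hc, dist_self]
      exact le_of_lt (zpow_pos p_pos _)
    · have hD : D = supIdx cv cw := if_neg hc
      exact le_trans ((supIdx_le_iff hc).mp (le_of_eq hD.symm)) (zpow_le_zpow_right₀ hple hDΓ)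
  -- support, constancy and bounds at the common scale
  have hvz : ∀ τ, 0 ≤ τ → ∀ z, (p:ℝ)^Γ < dist z c → v z τ = 0 := by
    intro τ hτ z hz
    exact (hv τ hτ).1 z (lt_of_le_of_lt (zpow_le_zpow_right₀ hple hBvΓ) hz)
  have hwz : ∀ τ, 0 ≤ τ → ∀ z, (p:ℝ)^Γ < dist z c → w z τ = 0 := by
    intro τ hτ z hz
    apply (hw τ hτ).1 z
    have hdist : dist cw z = dist z c := dist_of_far hcw hz
    rw [dist_comm] at hdist
    rw [hdist]
    exact lt_of_le_of_lt (zpow_le_zpow_right₀ hple hBwΓ) hz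
  have hvc : ∀ τ, 0 ≤ τ → ∀ z y, dist z y ≤ (p:ℝ)^γ → v z τ = v y τ := by
    intro τ hτ z y hzy
    exact (hv τ hτ).2.1 z y (le_trans hzy (zpow_le_zpow_right₀ hple (min_le_left _ _)))
  have hwc : ∀ τ, 0 ≤ τ → ∀ z y, dist z y ≤ (p:ℝ)^γ → w z τ = w y τ := by
    intro τ hτ z y hzy
    exact (hw τ hτ).2.1 z y (le_trans hzy (zpow_le_zpow_right₀ hple (min_le_right _ _)))
  set m : ℕ := (Γ - γ).toNat with hmdef
  have hΓm : Γ - (m:ℤ) = γ := by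
    have := Int.toNat_of_nonneg (by omega : (0:ℤ) ≤ Γ - γ)
    omega
  have hN : 0 < p ^ m := pow_pos (Fact.out : p.Prime).pos m
  haveI : Nonempty (Fin (p ^ m)) := ⟨⟨0, hN⟩⟩
  set pts : Fin (p ^ m) → ℚ_[p] := fun k => rep c Γ k.val with hptsdef
  have hpts : ∀ k, dist (pts k) c ≤ (p:ℝ)^Γ := by
    intro k
    exact Metric.mem_closedBall.mp (rep_mem c Γ (m := m) k.isLt)
  set u : ℝ → Fin (p ^ m) → ℂ := fun s k => v (pts k) s - w (pts k) s with hudef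
  have hu0 : u 0 = 0 := by
    funext k
    show v (pts k) 0 - w (pts k) 0 = 0
    rw [h0 (pts k), sub_self]
  have hdelta : ∀ τ, 0 ≤ τ → ∀ z, ‖v z τ - w z τ‖ ≤ ‖u τ‖ := by
    intro τ hτ z
    by_cases hz : dist z c ≤ (p:ℝ)^Γ
    · obtain ⟨k, hk, hkd⟩ := rep_cover (Metric.mem_closedBall.mpr hz) m
      rw [hΓm] at hkd
      have e1 : v z τ = v (pts ⟨k, hk⟩) τ := hvc τ hτ z (pts ⟨k, hk⟩) hkd
      have e2 : w z τ = w (pts ⟨k, hk⟩) τ := hwc τ hτ z (pts ⟨k, hk⟩) hkd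
      rw [e1, e2]
      exact norm_le_pi_norm (u τ) ⟨k, hk⟩
    · rw [hvz τ hτ z (not_le.mp hz), hwz τ hτ z (not_le.mp hz), sub_self]
      simp
  -- main argument
  intro x t ht
  rcases eq_or_lt_of_le ht with rfl | htpos
  · exact h0 x
  -- a uniform bound on both solutions on [0, t]
  have hsub0 : Set.Icc (0:ℝ) t ⊆ Set.Ici (0:ℝ) := fun s hs => hs.1
  have hYcont : ContinuousOn
      (fun s => (((fun k => v (pts k) s) : Fin (p ^ m) → ℂ),
        ((fun k => w (pts k) s) : Fin (p ^ m) → ℂ))) (Set.Icc 0 t) := by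
    apply ContinuousOn.prodMk
    · exact continuousOn_pi.mpr (fun k => ((hvC (pts k)).continuousOn).mono hsub0)
    · exact continuousOn_pi.mpr (fun k => ((hwC (pts k)).continuousOn).mono hsub0)
  obtain ⟨C, hC⟩ := isCompact_Icc.exists_bound_of_continuousOn hYcont
  set M : ℝ := max C 0 with hMdef
  have hM0 : 0 ≤ M := le_max_right _ _
  have hMv : ∀ τ, τ ∈ Set.Icc (0:ℝ) t → ∀ z, ‖v z τ‖ ≤ M := by
    intro τ hτ z
    by_cases hz : dist z c ≤ (p:ℝ)^Γ
    · obtain ⟨k, hk, hkd⟩ := rep_cover (Metric.mem_closedBall.mpr hz) m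
      rw [hΓm] at hkd
      rw [hvc τ hτ.1 z (pts ⟨k, hk⟩) hkd]
      set Y : (Fin (p ^ m) → ℂ) × (Fin (p ^ m) → ℂ) :=
        ((fun k => v (pts k) τ), (fun k => w (pts k) τ)) with hY
      have b1 : ‖v (pts ⟨k, hk⟩) τ‖ ≤ ‖Y.1‖ := norm_le_pi_norm Y.1 ⟨k, hk⟩
      have b2 : ‖Y.1‖ ≤ ‖Y‖ := norm_fst_le Y
      have b3 : ‖Y‖ ≤ C := hC τ hτ
      have b4 : C ≤ M := le_max_left _ _
      linarith
    · rw [hvz τ hτ.1 z (not_le.mp hz)]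
      simpa using hM0
  have hMw : ∀ τ, τ ∈ Set.Icc (0:ℝ) t → ∀ z, ‖w z τ‖ ≤ M := by
    intro τ hτ z
    by_cases hz : dist z c ≤ (p:ℝ)^Γ
    · obtain ⟨k, hk, hkd⟩ := rep_cover (Metric.mem_closedBall.mpr hz) m
      rw [hΓm] at hkd
      rw [hwc τ hτ.1 z (pts ⟨k, hk⟩) hkd]
      set Y : (Fin (p ^ m) → ℂ) × (Fin (p ^ m) → ℂ) :=
        ((fun k => v (pts k) τ), (fun k => w (pts k) τ)) with hY
      have b1 : ‖w (pts ⟨k, hk⟩) τ‖ ≤ ‖Y.2‖ := norm_le_pi_norm Y.2 ⟨k, hk⟩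
      have b2 : ‖Y.2‖ ≤ ‖Y‖ := norm_snd_le Y
      have b3 : ‖Y‖ ≤ C := hC τ hτ
      have b4 : C ≤ M := le_max_left _ _
      linarith
    · rw [hwz τ hτ.1 z (not_le.mp hz)]
      simpa using hM0
  -- the Lipschitz constant
  set Kfun : Fin (p ^ m) → ℝ := fun k =>
    4*M*((μ (Metric.closedBall c ((p:ℝ)^Γ))).toReal
        * (∫ η, maj c γ Γ (fun j => ‖F (pts k) j‖) η ∂μ))
      + 2*(∫ η, maj c γ Γ (fun j => ‖G (pts k) j‖) η ∂μ) with hKfun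
  set K : ℝ := Finset.univ.sup' Finset.univ_nonempty Kfun with hKdef
  have hKge : ∀ k, Kfun k ≤ K := fun k => Finset.le_sup' Kfun (Finset.mem_univ k)
  have hKnn : 0 ≤ K := by
    refine le_trans ?_ (hKge (Classical.arbitrary _))
    apply add_nonneg
    · apply mul_nonneg (by linarith)
      exact mul_nonneg ENNReal.toReal_nonneg
        (integral_nonneg (maj_nonneg (fun j => norm_nonneg _)))
    · apply mul_nonneg (by norm_num)
      exact integral_nonneg (maj_nonneg (fun j => norm_nonneg _))
  -- derivative of u
  set d : ℝ → Fin (p ^ m) → ℂ := fun s k =>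
    -(cascadeOp μ F G (fun y => v y s) (pts k)) - -(cascadeOp μ F G (fun y => w y s) (pts k))
    with hddef
  -- the Grönwall estimate from any positive starting time
  have grown : ∀ s0, 0 < s0 → s0 ≤ t → ‖u t‖ ≤ ‖u s0‖ * Real.exp (K * (t - s0)) := by
    intro s0 hpos hle
    have hsub : Set.Icc s0 t ⊆ Set.Ici (0:ℝ) := fun s hs => le_trans (le_of_lt hpos) hs.1
    have hcont : ContinuousOn u (Set.Icc s0 t) :=
      continuousOn_pi.mpr (fun k =>
        (((hvC (pts k)).continuousOn).mono hsub).sub (((hwC (pts k)).continuousOn).mono hsub))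
    have hder : ∀ τ ∈ Set.Ico s0 t, HasDerivWithinAt u (d τ) (Set.Ici τ) τ := by
      intro τ hτ
      have hτpos : 0 < τ := lt_of_lt_of_le hpos hτ.1
      exact (hasDerivAt_pi.mpr (fun k =>
        ((hveq (pts k) τ hτpos).sub (hweq (pts k) τ hτpos)))).hasDerivWithinAt
    have hbound : ∀ τ ∈ Set.Ico s0 t, ‖d τ‖ ≤ K * ‖u τ‖ + 0 := by
      intro τ hτ
      rw [add_zero]
      have hτpos : 0 < τ := lt_of_lt_of_le hpos hτ.1
      have hτmem : τ ∈ Set.Icc (0:ℝ) t := ⟨le_of_lt hτpos, le_of_lt hτ.2⟩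
      rw [pi_norm_le_iff_of_nonneg (mul_nonneg hKnn (norm_nonneg _))]
      intro k
      have hdk : d τ k = -((cascadeOp μ F G (fun y => v y τ) (pts k))
          - (cascadeOp μ F G (fun y => w y τ) (pts k))) := by
        show -(cascadeOp μ F G (fun y => v y τ) (pts k))
          - -(cascadeOp μ F G (fun y => w y τ) (pts k)) = _
        ring
      rw [hdk, norm_neg]
      have hb := cascadeOp_diff_bound (c := c) (γ := γ) (Γ := Γ) μ F G hΓ0 (hpts k)
        (hFs (pts k) Γ) (hGs (pts k) Γ)
        (hvz τ (le_of_lt hτpos)) (hwz τ (le_of_lt hτpos))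
        (hvc τ (le_of_lt hτpos)) (hwc τ (le_of_lt hτpos))
        (hMv τ hτmem) (hMw τ hτmem) (hdelta τ (le_of_lt hτpos))
      refine le_trans hb ?_
      exact mul_le_mul_of_nonneg_right (hKge k) (norm_nonneg _)
    have hres := norm_le_gronwallBound_of_norm_deriv_right_le hcont hder
      (le_refl ‖u s0‖) hbound t ⟨hle, le_refl t⟩
    rwa [gronwallBound_ε0] at hres
  -- let the starting time go to zero
  have hut : ‖u t‖ ≤ 0 := by
    by_contra hcon
    push_neg at hcon
    have hεfin : ∀ ε, 0 < ε → ‖u t‖ ≤ ε := by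
      intro ε hε
      have hucont : ContinuousOn u (Set.Icc 0 t) :=
        continuousOn_pi.mpr (fun k =>
          (((hvC (pts k)).continuousOn).mono hsub0).sub (((hwC (pts k)).continuousOn).mono hsub0))
      have hcwa : ContinuousWithinAt u (Set.Icc 0 t) 0 := hucont 0 ⟨le_refl 0, ht⟩
      have hε' : 0 < ε / Real.exp (K * t) := div_pos hε (Real.exp_pos _)
      obtain ⟨θ, hθpos, hθ⟩ := Metric.continuousWithinAt_iff.mp hcwa (ε / Real.exp (K * t)) hε'
      set s0 : ℝ := min (θ/2) t with hs0def
      have hs0pos : 0 < s0 := lt_min (by linarith) htpos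
      have hs0le : s0 ≤ t := min_le_right _ _
      have hs0mem : s0 ∈ Set.Icc (0:ℝ) t := ⟨le_of_lt hs0pos, hs0le⟩
      have hs0θ : dist s0 0 < θ := by
        rw [Real.dist_eq, sub_zero, abs_of_pos hs0pos]
        calc s0 ≤ θ/2 := min_le_left _ _
          _ < θ := by linarith
      have hus0 : ‖u s0‖ < ε / Real.exp (K * t) := by
        have := hθ hs0mem hs0θ
        rwa [hu0, dist_zero_right] at this
      have h1 := grown s0 hs0pos hs0le
      have h2 : Real.exp (K * (t - s0)) ≤ Real.exp (K * t) := by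
        apply Real.exp_le_exp.mpr
        apply mul_le_mul_of_nonneg_left _ hKnn
        linarith
      calc ‖u t‖ ≤ ‖u s0‖ * Real.exp (K * (t - s0)) := h1
        _ ≤ (ε / Real.exp (K * t)) * Real.exp (K * t) := by
            apply mul_le_mul (le_of_lt hus0) h2 (le_of_lt (Real.exp_pos _)) (le_of_lt hε')
        _ = ε := div_mul_cancel₀ ε (ne_of_gt (Real.exp_pos _))
    have := hεfin (‖u t‖/2) (by linarith)
    linarith
  have hzero : ∀ z, ‖v z t - w z t‖ ≤ 0 := fun z => le_trans (hdelta t ht z) hut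
  have := norm_le_zero_iff.mp (hzero x)
  exact sub_eq_zero.mp this
end

section
/- Let F be a summable ball kernel and let φ and ψ be ultrametric wavelets. Then for every x ∈ ℚ_p the double integral defining 𝓘[φ, ψ](x) converges absolutely, i.e. ∫∫ |F(sup(x, ξ, η)) φ(ξ)(ψ(η) − ψ(x))| dμ(ξ) dμ(η) < ∞. -/
open MeasureTheory

section Helpers

open Metric ENNReal

variable {p : ℕ} [Fact p.Prime]

lemma pR_pos : (0:ℝ) < p := by exact_mod_cast (Fact.out : p.Prime).pos
lemma one_lt_pR : (1:ℝ) < p := by exact_mod_cast (Fact.out : p.Prime).one_lt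

lemma padic_norm_sub_le_max (a b : ℚ_[p]) : ‖a - b‖ ≤ max ‖a‖ ‖b‖ := by
  rw [sub_eq_add_neg]
  simpa using Padic.nonarchimedean a (-b)

lemma supIdx_self (x : ℚ_[p]) : supIdx x x = 0 := by
  simp [supIdx, Padic.valuation_zero]

lemma norm_eq_pow_supIdx {x y : ℚ_[p]} (h : x ≠ y) : ‖x - y‖ = (p:ℝ) ^ (supIdx x y) := by
  rw [supIdx, ← Padic.norm_eq_zpow_neg_valuation (sub_ne_zero.mpr h)]

lemma supIdx_le_of_norm_le {x y : ℚ_[p]} {γ : ℤ} (hγ : 0 ≤ γ)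
    (h : ‖x - y‖ ≤ (p:ℝ)^γ) : supIdx x y ≤ γ := by
  by_cases hxy : x = y
  · rw [hxy, supIdx_self]; exact hγ
  · rw [norm_eq_pow_supIdx hxy] at h
    exact (zpow_le_zpow_iff_right₀ one_lt_pR).mp h

lemma lt_supIdx_of_lt_norm {x y : ℚ_[p]} {γ : ℤ} (h : (p:ℝ)^γ < ‖x - y‖) :
    γ < supIdx x y ∧ x ≠ y := by
  have hxy : x ≠ y := by
    intro hxy
    rw [hxy, sub_self, norm_zero] at h
    exact absurd h (not_lt.mpr (le_of_lt (zpow_pos pR_pos _)))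
  rw [norm_eq_pow_supIdx hxy] at h
  exact ⟨(zpow_lt_zpow_iff_right₀ one_lt_pR).mp h, hxy⟩

lemma exists_digit (z : ℚ_[p]) (hz : ‖z‖ ≤ 1) : ∃ i : ℕ, i < p ∧ ‖z - (i:ℚ_[p])‖ ≤ (p:ℝ)⁻¹ := by
  set w : ℤ_[p] := ⟨z, hz⟩
  refine ⟨w.appr 1, by simpa using w.appr_lt 1, ?_⟩
  have h1 := (PadicInt.norm_le_pow_iff_mem_span_pow (w - (w.appr 1 : ℤ_[p])) 1).mpr
    (PadicInt.appr_spec 1 w)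
  have h2 : ((w - (w.appr 1 : ℤ_[p]) : ℤ_[p]) : ℚ_[p]) = z - (w.appr 1 : ℚ_[p]) := by
    push_cast; rfl
  rw [PadicInt.norm_def, h2] at h1
  simpa using h1

lemma ball_eq_biUnion (c : ℚ_[p]) (γ : ℤ) :
    closedBall c ((p:ℝ)^γ) =
      ⋃ i ∈ Finset.range p, closedBall (c + (i:ℚ_[p]) * (p:ℚ_[p])^(-γ)) ((p:ℝ)^(γ-1)) := by
  have hp0 : (p:ℚ_[p]) ≠ 0 := by
    exact_mod_cast Nat.cast_ne_zero.mpr (Fact.out : p.Prime).ne_zero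
  have hinv : (p:ℚ_[p])^γ * (p:ℚ_[p])^(-γ) = 1 := by rw [← zpow_add₀ hp0]; simp
  ext y
  simp only [Set.mem_iUnion, Finset.mem_range, mem_closedBall, dist_eq_norm]
  constructor
  · intro hy
    have hz : ‖(y - c) * (p:ℚ_[p])^γ‖ ≤ 1 := by
      rw [norm_mul, Padic.norm_p_zpow]
      calc ‖y - c‖ * (p:ℝ)^(-γ) ≤ (p:ℝ)^γ * (p:ℝ)^(-γ) := by
            apply mul_le_mul_of_nonneg_right hy (zpow_nonneg (le_of_lt pR_pos) _)
        _ = 1 := by rw [← zpow_add₀ (ne_of_gt pR_pos)]; simp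
    obtain ⟨i, hip, hi⟩ := exists_digit _ hz
    refine ⟨i, hip, ?_⟩
    have key : y - (c + (i:ℚ_[p]) * (p:ℚ_[p])^(-γ)) =
        ((y - c) * (p:ℚ_[p])^γ - i) * (p:ℚ_[p])^(-γ) := by
      calc y - (c + (i:ℚ_[p]) * (p:ℚ_[p])^(-γ))
          = (y-c) * ((p:ℚ_[p])^γ * (p:ℚ_[p])^(-γ)) - i * (p:ℚ_[p])^(-γ) := by rw [hinv]; ring
        _ = ((y - c) * (p:ℚ_[p])^γ - i) * (p:ℚ_[p])^(-γ) := by ring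
    rw [key, norm_mul, Padic.norm_p_zpow, neg_neg]
    calc ‖(y - c) * (p:ℚ_[p])^γ - i‖ * (p:ℝ)^γ ≤ (p:ℝ)⁻¹ * (p:ℝ)^γ := by
          apply mul_le_mul_of_nonneg_right hi (zpow_nonneg (le_of_lt pR_pos) _)
      _ = (p:ℝ)^(γ-1) := by
          rw [← zpow_neg_one, ← zpow_add₀ (ne_of_gt pR_pos)]; ring_nf
  · rintro ⟨i, hip, hi⟩
    have h1 : ‖y - (c + (i:ℚ_[p]) * (p:ℚ_[p])^(-γ))‖ ≤ (p:ℝ)^γ :=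
      le_trans hi (zpow_le_zpow_right₀ (le_of_lt one_lt_pR) (by omega))
    have h2 : ‖(i:ℚ_[p]) * (p:ℚ_[p])^(-γ)‖ ≤ (p:ℝ)^γ := by
      rw [norm_mul, Padic.norm_p_zpow, neg_neg]
      calc ‖(i:ℚ_[p])‖ * (p:ℝ)^γ ≤ 1 * (p:ℝ)^γ := by
            apply mul_le_mul_of_nonneg_right _ (zpow_nonneg (le_of_lt pR_pos) _)
            exact_mod_cast Padic.norm_int_le_one ((i:ℤ))
        _ = (p:ℝ)^γ := one_mul _
    calc ‖y - c‖ = ‖(y - (c + (i:ℚ_[p]) * (p:ℚ_[p])^(-γ))) + (i:ℚ_[p]) * (p:ℚ_[p])^(-γ)‖ := by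
          ring_nf
      _ ≤ max ‖y - (c + (i:ℚ_[p]) * (p:ℚ_[p])^(-γ))‖ ‖(i:ℚ_[p]) * (p:ℚ_[p])^(-γ)‖ :=
          Padic.nonarchimedean _ _
      _ ≤ (p:ℝ)^γ := max_le h1 h2

lemma balls_disjoint (c : ℚ_[p]) (γ : ℤ) {i j : ℕ} (hi : i < p) (hj : j < p) (hij : i ≠ j) :
    Disjoint (closedBall (c + (i:ℚ_[p]) * (p:ℚ_[p])^(-γ)) ((p:ℝ)^(γ-1)))
      (closedBall (c + (j:ℚ_[p]) * (p:ℚ_[p])^(-γ)) ((p:ℝ)^(γ-1))) := by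
  rw [Set.disjoint_left]
  intro y hyi hyj
  rw [mem_closedBall, dist_eq_norm] at hyi hyj
  have hpg : (0:ℝ) < (p:ℝ)^γ := zpow_pos pR_pos _
  have hd : ‖((i:ℚ_[p]) - j) * (p:ℚ_[p])^(-γ)‖ ≤ (p:ℝ)^(γ-1) := by
    have e : ((i:ℚ_[p]) - j) * (p:ℚ_[p])^(-γ) =
        (y - (c + (j:ℚ_[p]) * (p:ℚ_[p])^(-γ))) - (y - (c + (i:ℚ_[p]) * (p:ℚ_[p])^(-γ))) := by ring
    rw [e]
    exact le_trans (padic_norm_sub_le_max _ _) (max_le hyj hyi)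
  rw [norm_mul, Padic.norm_p_zpow, neg_neg] at hd
  have hd2 : ‖(i:ℚ_[p]) - j‖ ≤ (p:ℝ)⁻¹ := by
    have e2 : (p:ℝ)^(γ-1) = (p:ℝ)⁻¹ * (p:ℝ)^γ := by
      rw [zpow_sub₀ (ne_of_gt pR_pos), zpow_one]; ring
    rw [e2] at hd
    exact le_of_mul_le_mul_right hd hpg
  have hlt : ‖(((i:ℤ) - j : ℤ) : ℚ_[p])‖ < 1 := by
    push_cast
    calc ‖(i:ℚ_[p]) - j‖ ≤ (p:ℝ)⁻¹ := hd2
      _ < 1 := by rw [inv_lt_one_iff₀]; right; exact one_lt_pR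
  rw [Padic.norm_intCast_lt_one_iff] at hlt
  have hne : ((i:ℤ) - j) ≠ 0 := sub_ne_zero.mpr (by exact_mod_cast hij)
  have h1 : (p:ℤ) ≤ |(i:ℤ) - j| := Int.le_of_dvd (abs_pos.mpr hne) ((dvd_abs _ _).mpr hlt)
  have h2 : |(i:ℤ) - j| < p := by rw [abs_sub_lt_iff]; omega
  omega

lemma measure_closedBall_padic [MeasurableSpace ℚ_[p]] [BorelSpace ℚ_[p]]
    (μ : MeasureTheory.Measure ℚ_[p]) [μ.IsAddHaarMeasure]
    (hμ : μ (closedBall 0 1) = 1) (γ : ℤ) (c : ℚ_[p]) :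
    μ (closedBall c ((p:ℝ)^γ)) = ENNReal.ofReal ((p:ℝ)^γ) := by
  have htrans : ∀ (c' : ℚ_[p]) (r : ℝ), μ (closedBall c' r) = μ (closedBall 0 r) := by
    intro c' r
    have hpre : (fun h => c' + h) ⁻¹' closedBall c' r = closedBall 0 r := by
      ext h
      simp [dist_eq_norm]
    rw [← hpre, MeasureTheory.measure_preimage_add]
  have hrec : ∀ γ : ℤ, μ (closedBall (0:ℚ_[p]) ((p:ℝ)^γ)) =
      p * μ (closedBall (0:ℚ_[p]) ((p:ℝ)^(γ-1))) := by
    intro γ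
    rw [ball_eq_biUnion (0:ℚ_[p]) γ, MeasureTheory.measure_biUnion_finset]
    · rw [Finset.sum_congr rfl (fun i _ => htrans _ _), Finset.sum_const, Finset.card_range,
        nsmul_eq_mul]
    · intro i hi j hj hij
      exact balls_disjoint _ _ (Finset.mem_range.mp hi) (Finset.mem_range.mp hj) hij
    · intro b _
      exact measurableSet_closedBall
  suffices h : ∀ γ : ℤ, μ (closedBall (0:ℚ_[p]) ((p:ℝ)^γ)) = ENNReal.ofReal ((p:ℝ)^γ) by
    rw [htrans]; exact h γ
  have hp0 : (p:ℝ≥0∞) ≠ 0 := by exact_mod_cast (Fact.out : p.Prime).ne_zero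
  have hptop : (p:ℝ≥0∞) ≠ ⊤ := ENNReal.natCast_ne_top p
  have hstep : ∀ γ : ℤ, ENNReal.ofReal ((p:ℝ)^γ) = p * ENNReal.ofReal ((p:ℝ)^(γ-1)) := by
    intro γ
    rw [← ENNReal.ofReal_natCast p, ← ENNReal.ofReal_mul (by positivity)]
    congr 1
    rw [← zpow_one_add₀ (ne_of_gt pR_pos)]
    ring_nf
  intro γ
  induction γ using Int.induction_on with
  | zero => simpa using hμ
  | succ n ih =>
      have := hrec (n+1)
      rw [show ((n:ℤ)+1-1) = n by ring] at this
      rw [this, ih, hstep (n+1)]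
      norm_num
  | pred n ih =>
      have h1 := hrec (-n)
      rw [ih, hstep (-n)] at h1
      have hc : ∀ a b : ℝ≥0∞, (p:ℝ≥0∞) * a = p * b → a = b := by
        intro a b h
        have h' := congrArg ((p:ℝ≥0∞)⁻¹ * ·) h
        simpa [← mul_assoc, ENNReal.inv_mul_cancel hp0 hptop] using h'
      exact hc _ _ h1.symm

end Helpers

section Helpers2

open Metric ENNReal NNReal MeasureTheory

variable {p : ℕ} [Fact p.Prime]

lemma wavelet_nnnorm_bound [MeasurableSpace ℚ_[p]] (μ : Measure ℚ_[p])
    {ψ : ℚ_[p] → ℂ} {c : ℚ_[p]} {γ : ℤ} (hψ : IsWavelet μ ψ c γ) :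
    ∃ M : ℝ≥0, ∀ y, ‖ψ y‖₊ ≤ M := by
  refine ⟨(Finset.range p).sup (fun i => ‖ψ (c + (i:ℚ_[p]) * (p:ℚ_[p])^(-γ))‖₊), fun y => ?_⟩
  by_cases hy : y ∈ closedBall c ((p:ℝ)^γ)
  · rw [ball_eq_biUnion c γ] at hy
    simp only [Set.mem_iUnion, Finset.mem_range, mem_closedBall] at hy
    obtain ⟨i, hip, hi⟩ := hy
    rw [hψ.2.1 y _ hi]
    exact Finset.le_sup (f := fun i : ℕ => ‖ψ (c + (i:ℚ_[p]) * (p:ℚ_[p])^(-γ))‖₊) (Finset.mem_range.mpr hip)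
  · rw [mem_closedBall, not_le] at hy
    rw [hψ.1 y hy]
    simp

lemma tail_lintegral_lt_top [MeasurableSpace ℚ_[p]] [BorelSpace ℚ_[p]]
    (μ : Measure ℚ_[p]) [μ.IsAddHaarMeasure] (hμ : μ (closedBall 0 1) = 1)
    (F : ℚ_[p] → ℤ → ℂ) (hFs : KernelSummable F) (x : ℚ_[p]) (γ₁ : ℤ) :
    ∫⁻ η in (closedBall x ((p:ℝ)^γ₁))ᶜ, (‖F x (supIdx x η)‖₊ : ℝ≥0∞) ∂μ < ⊤ := by
  set A : ℕ → Set ℚ_[p] :=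
    fun n => closedBall x ((p:ℝ)^(γ₁+1+(n:ℤ))) \ closedBall x ((p:ℝ)^(γ₁+(n:ℤ))) with hA
  have hsub : (closedBall x ((p:ℝ)^γ₁))ᶜ ⊆ ⋃ n, A n := by
    intro η hη
    rw [Set.mem_compl_iff, mem_closedBall, not_le, dist_eq_norm] at hη
    obtain ⟨hlt, hne⟩ := lt_supIdx_of_lt_norm (by rwa [norm_sub_rev] at hη)
    set m := supIdx x η with hm
    have hnorm : ‖η - x‖ = (p:ℝ)^m := by rw [norm_sub_rev]; exact norm_eq_pow_supIdx hne
    refine Set.mem_iUnion.mpr ⟨(m - γ₁ - 1).toNat, ?_, ?_⟩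
    · rw [mem_closedBall, dist_eq_norm, hnorm]
      apply zpow_le_zpow_right₀ (le_of_lt one_lt_pR)
      omega
    · rw [mem_closedBall, dist_eq_norm, hnorm, not_le]
      apply zpow_lt_zpow_right₀ one_lt_pR
      omega
  have heach : ∀ n : ℕ, ∫⁻ η in A n, (‖F x (supIdx x η)‖₊ : ℝ≥0∞) ∂μ ≤
      (‖F x (γ₁+1+(n:ℤ))‖₊ : ℝ≥0∞) *
        ENNReal.ofReal ((p:ℝ)^(γ₁+1+(n:ℤ)) - (p:ℝ)^(γ₁+(n:ℤ))) := by
    intro n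
    have hAm : MeasurableSet (A n) := measurableSet_closedBall.diff measurableSet_closedBall
    have hidx : ∀ η ∈ A n, supIdx x η = γ₁+1+(n:ℤ) := by
      intro η hη
      obtain ⟨h1, h2⟩ := hη
      rw [mem_closedBall, dist_eq_norm] at h1
      rw [mem_closedBall, dist_eq_norm, not_le] at h2
      obtain ⟨hlt, hne⟩ := lt_supIdx_of_lt_norm (by rwa [norm_sub_rev] at h2)
      have h1' : supIdx x η ≤ γ₁+1+(n:ℤ) := by
        rw [norm_sub_rev] at h1
        rw [norm_eq_pow_supIdx hne] at h1
        exact (zpow_le_zpow_iff_right₀ one_lt_pR).mp h1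
      omega
    have hmono : ∫⁻ η in A n, (‖F x (supIdx x η)‖₊ : ℝ≥0∞) ∂μ ≤
        ∫⁻ _ in A n, (‖F x (γ₁+1+(n:ℤ))‖₊ : ℝ≥0∞) ∂μ :=
      setLIntegral_mono' hAm (fun η hη => by rw [hidx η hη])
    refine le_trans hmono ?_
    rw [setLIntegral_const]
    apply mul_le_mul_right
    have hss : closedBall x ((p:ℝ)^(γ₁+(n:ℤ))) ⊆ closedBall x ((p:ℝ)^(γ₁+1+(n:ℤ))) :=
      closedBall_subset_closedBall (zpow_le_zpow_right₀ (le_of_lt one_lt_pR) (by omega))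
    have hfin : μ (closedBall x ((p:ℝ)^(γ₁+(n:ℤ)))) ≠ ⊤ := by
      rw [measure_closedBall_padic μ hμ]
      exact ENNReal.ofReal_ne_top
    rw [hA]
    rw [measure_diff hss measurableSet_closedBall.nullMeasurableSet hfin,
      measure_closedBall_padic μ hμ, measure_closedBall_padic μ hμ,
      ← ENNReal.ofReal_sub _ (le_of_lt (zpow_pos pR_pos _))]
  calc ∫⁻ η in (closedBall x ((p:ℝ)^γ₁))ᶜ, (‖F x (supIdx x η)‖₊ : ℝ≥0∞) ∂μ
      ≤ ∫⁻ η in ⋃ n, A n, (‖F x (supIdx x η)‖₊ : ℝ≥0∞) ∂μ := lintegral_mono_set hsub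
    _ ≤ ∑' (n : ℕ), ∫⁻ η in A n, (‖F x (supIdx x η)‖₊ : ℝ≥0∞) ∂μ := lintegral_iUnion_le _ _
    _ ≤ ∑' (n : ℕ), (‖F x (γ₁+1+(n:ℤ))‖₊ : ℝ≥0∞) *
          ENNReal.ofReal ((p:ℝ)^(γ₁+1+(n:ℤ)) - (p:ℝ)^(γ₁+(n:ℤ))) := ENNReal.tsum_le_tsum heach
    _ = ∑' (n : ℕ), ENNReal.ofReal
          (‖F x (γ₁+1+(n:ℤ))‖ * ((p:ℝ)^(γ₁+1+(n:ℤ)) - (p:ℝ)^(γ₁+(n:ℤ)))) := by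
        refine tsum_congr fun n => ?_
        rw [ENNReal.ofReal_mul (norm_nonneg _), ofReal_norm, enorm_eq_nnnorm]
    _ < ⊤ := by
        rw [← ENNReal.ofReal_tsum_of_nonneg (fun n => ?_) (hFs x γ₁)]
        · exact ENNReal.ofReal_lt_top
        · have hle : (p:ℝ)^(γ₁+(n:ℤ)) ≤ (p:ℝ)^(γ₁+1+(n:ℤ)) :=
            zpow_le_zpow_right₀ (le_of_lt one_lt_pR) (by omega)
          have : (0:ℝ) ≤ ‖F x (γ₁+1+(n:ℤ))‖ := norm_nonneg _
          nlinarith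

/-- For a summable ball kernel `F` and ultrametric wavelets `φ`, `ψ`, the
double integral defining `𝓘[φ,ψ](x)` converges absolutely:
`∫∫ ‖F(sup(x,ξ,η)) φ(ξ)(ψ(η) - ψ(x))‖ dμ(ξ) dμ(η) < ∞`. -/
theorem I_integral_abs_convergent {p : ℕ} [Fact p.Prime]
    [MeasurableSpace ℚ_[p]] [BorelSpace ℚ_[p]]
    (μ : Measure ℚ_[p]) [μ.IsAddHaarMeasure] (hμ : μ (Metric.closedBall 0 1) = 1)
    (F : ℚ_[p] → ℤ → ℂ) (hF : IsBallKernel F) (hFs : KernelSummable F)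
    (φ ψ : ℚ_[p] → ℂ) (cφ cψ : ℚ_[p]) (γφ γψ : ℤ)
    (hφ : IsWavelet μ φ cφ γφ) (hψ : IsWavelet μ ψ cψ γψ) :
    ∀ x : ℚ_[p],
      (∫⁻ ξ, ∫⁻ η, ‖F x (sup3Idx x ξ η) * (φ ξ * (ψ η - ψ x))‖₊ ∂μ ∂μ) < ⊤ := by
  intro x
  classical
  obtain ⟨Mφ, hMφ⟩ := wavelet_nnnorm_bound μ hφ
  obtain ⟨Mψ, hMψ⟩ := wavelet_nnnorm_bound μ hψ
  set γ₁ : ℤ := max 0 (max γφ (max γψ (max (supIdx x cφ) (supIdx x cψ)))) with hγ₁def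
  have hγ₁0 : (0:ℤ) ≤ γ₁ := le_max_left _ _
  have hγφ1 : γφ ≤ γ₁ := le_trans (le_max_left _ _) (le_max_right _ _)
  have hγψ1 : γψ ≤ γ₁ :=
    le_trans (le_trans (le_max_left _ _) (le_max_right _ _)) (le_max_right _ _)
  have hcφ1 : supIdx x cφ ≤ γ₁ :=
    le_trans (le_trans (le_trans (le_max_left _ _) (le_max_right _ _)) (le_max_right _ _))
      (le_max_right _ _)
  have hcψ1 : supIdx x cψ ≤ γ₁ :=
    le_trans (le_trans (le_trans (le_max_right _ _) (le_max_right _ _)) (le_max_right _ _))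
      (le_max_right _ _)
  set B₁ : Set ℚ_[p] := Metric.closedBall x ((p:ℝ)^γ₁) with hB₁def
  have hB₁m : MeasurableSet B₁ := measurableSet_closedBall
  have hμB₁ : μ B₁ = ENNReal.ofReal ((p:ℝ)^γ₁) := measure_closedBall_padic μ hμ γ₁ x
  have hμB₁top : μ B₁ < ⊤ := by rw [hμB₁]; exact ENNReal.ofReal_lt_top
  have hxc : ∀ (c' : ℚ_[p]), supIdx x c' ≤ γ₁ → ‖x - c'‖ ≤ (p:ℝ)^γ₁ := by
    intro c' h
    by_cases hxx : x = c'
    · rw [hxx, sub_self, norm_zero]; positivity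
    · rw [norm_eq_pow_supIdx hxx]; exact zpow_le_zpow_right₀ (le_of_lt one_lt_pR) h
  have hφ0 : ∀ ξ, ξ ∉ B₁ → φ ξ = 0 := by
    intro ξ hξ
    apply hφ.1
    by_contra hcon
    rw [not_lt] at hcon
    apply hξ
    rw [hB₁def, Metric.mem_closedBall, dist_eq_norm]
    have h1 : ‖ξ - cφ‖ ≤ (p:ℝ)^γ₁ :=
      le_trans (by rwa [dist_eq_norm] at hcon)
        (zpow_le_zpow_right₀ (le_of_lt one_lt_pR) hγφ1)
    have h2 : ‖x - cφ‖ ≤ (p:ℝ)^γ₁ := hxc cφ hcφ1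
    calc ‖ξ - x‖ = ‖(ξ - cφ) - (x - cφ)‖ := by ring_nf
      _ ≤ max ‖ξ - cφ‖ ‖x - cφ‖ := padic_norm_sub_le_max _ _
      _ ≤ (p:ℝ)^γ₁ := max_le h1 h2
  -- membership norm facts
  have hmemnorm : ∀ ζ, ζ ∈ B₁ → ‖x - ζ‖ ≤ (p:ℝ)^γ₁ := by
    intro ζ hζ
    rw [hB₁def, Metric.mem_closedBall, dist_eq_norm] at hζ
    rwa [norm_sub_rev]
  set K : ℝ≥0∞ := ∑ γI ∈ Finset.Icc γψ γ₁, (‖F x γI‖₊ : ℝ≥0∞) with hKdef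
  have hKtop : K < ⊤ := by
    rw [hKdef]
    exact ENNReal.sum_lt_top.mpr (fun a _ => ENNReal.coe_lt_top)
  set C : ℝ≥0∞ := ((Mφ * (Mψ + Mψ) : ℝ≥0) : ℝ≥0∞) with hCdef
  have hCtop : C ≠ ⊤ := ENNReal.coe_ne_top
  have hprodbound : ∀ ξ η, (‖φ ξ * (ψ η - ψ x)‖₊ : ℝ≥0∞) ≤ C := by
    intro ξ η
    rw [hCdef]
    refine ENNReal.coe_le_coe.mpr ?_
    calc ‖φ ξ * (ψ η - ψ x)‖₊ = ‖φ ξ‖₊ * ‖ψ η - ψ x‖₊ := nnnorm_mul _ _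
      _ ≤ Mφ * (Mψ + Mψ) :=
          mul_le_mul' (hMφ ξ) (le_trans (nnnorm_sub_le _ _) (add_le_add (hMψ η) (hMψ x)))
  set g : ℚ_[p] → ℝ≥0∞ :=
    fun η => if η ∈ B₁ then K else (‖F x (supIdx x η)‖₊ : ℝ≥0∞) with hgdef
  have hbound : ∀ ξ η, (‖F x (sup3Idx x ξ η) * (φ ξ * (ψ η - ψ x))‖₊ : ℝ≥0∞) ≤
      B₁.indicator (fun _ => C) ξ * g η := by
    intro ξ η
    by_cases hξ : ξ ∈ B₁
    swap
    · simp [hφ0 ξ hξ]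
    rw [Set.indicator_of_mem hξ]
    have hsplit : (‖F x (sup3Idx x ξ η) * (φ ξ * (ψ η - ψ x))‖₊ : ℝ≥0∞) =
        (‖F x (sup3Idx x ξ η)‖₊ : ℝ≥0∞) * (‖φ ξ * (ψ η - ψ x)‖₊ : ℝ≥0∞) := by
      rw [nnnorm_mul, ENNReal.coe_mul]
    have ha : supIdx x ξ ≤ γ₁ := supIdx_le_of_norm_le hγ₁0 (hmemnorm ξ hξ)
    by_cases hη : η ∈ B₁
    · by_cases heq : ψ η = ψ x
      · simp [heq]
      · -- inner region
        have hηx : (p:ℝ)^(γψ-1) < dist η x := by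
          by_contra h
          rw [not_lt] at h
          exact heq (hψ.2.1 η x h)
        rw [dist_eq_norm] at hηx
        have hηx' : (p:ℝ)^(γψ-1) < ‖x - η‖ := by rwa [norm_sub_rev] at hηx
        obtain ⟨hlt, hne⟩ := lt_supIdx_of_lt_norm hηx'
        have hm1 : γψ ≤ supIdx x η := by omega
        have hm2 : supIdx x η ≤ γ₁ := supIdx_le_of_norm_le hγ₁0 (hmemnorm η hη)
        have hsnorm : ‖ξ - η‖ ≤ (p:ℝ)^γ₁ := by
          calc ‖ξ - η‖ = ‖(x - η) - (x - ξ)‖ := by ring_nf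
            _ ≤ max ‖x - η‖ ‖x - ξ‖ := padic_norm_sub_le_max _ _
            _ ≤ (p:ℝ)^γ₁ := max_le (hmemnorm η hη) (hmemnorm ξ hξ)
        have hs : supIdx ξ η ≤ γ₁ := supIdx_le_of_norm_le hγ₁0 hsnorm
        have hmem : sup3Idx x ξ η ∈ Finset.Icc γψ γ₁ := by
          simp only [sup3Idx, Finset.mem_Icc]
          omega
        have hFK : (‖F x (sup3Idx x ξ η)‖₊ : ℝ≥0∞) ≤ K := by
          rw [hKdef]
          exact Finset.single_le_sum
            (f := fun γI => ((‖F x γI‖₊ : ℝ≥0∞))) (fun _ _ => zero_le) hmem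
        have hgη : g η = K := if_pos hη
        rw [hgη, hsplit]
        calc (‖F x (sup3Idx x ξ η)‖₊ : ℝ≥0∞) * (‖φ ξ * (ψ η - ψ x)‖₊ : ℝ≥0∞)
            ≤ K * C := mul_le_mul' hFK (hprodbound ξ η)
          _ = C * K := mul_comm _ _
    · -- outer region
      have hη' : (p:ℝ)^γ₁ < ‖x - η‖ := by
        rw [hB₁def, Metric.mem_closedBall, not_le, dist_eq_norm, norm_sub_rev] at hη
        exact hη
      obtain ⟨hlt, hne⟩ := lt_supIdx_of_lt_norm hη'
      have hnm : ‖x - η‖ = (p:ℝ)^(supIdx x η) := norm_eq_pow_supIdx hne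
      have hupper : ‖ξ - η‖ ≤ ‖x - η‖ := by
        calc ‖ξ - η‖ = ‖(x - η) - (x - ξ)‖ := by ring_nf
          _ ≤ max ‖x - η‖ ‖x - ξ‖ := padic_norm_sub_le_max _ _
          _ ≤ ‖x - η‖ := max_le le_rfl (le_of_lt (lt_of_le_of_lt (hmemnorm ξ hξ) hη'))
      have hs : supIdx ξ η ≤ supIdx x η :=
        supIdx_le_of_norm_le (by omega) (hupper.trans_eq hnm)
      have h4 : sup3Idx x ξ η = supIdx x η := by
        simp only [sup3Idx]
        omega
      have hgη : g η = (‖F x (supIdx x η)‖₊ : ℝ≥0∞) := if_neg hη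
      rw [hgη, hsplit, h4]
      calc (‖F x (supIdx x η)‖₊ : ℝ≥0∞) * (‖φ ξ * (ψ η - ψ x)‖₊ : ℝ≥0∞)
          ≤ (‖F x (supIdx x η)‖₊ : ℝ≥0∞) * C := mul_le_mul' le_rfl (hprodbound ξ η)
        _ = C * (‖F x (supIdx x η)‖₊ : ℝ≥0∞) := mul_comm _ _
  -- the integral of g is finite
  have hI : ∫⁻ η, g η ∂μ < ⊤ := by
    have hgsplit : g = fun η => B₁.indicator (fun _ => K) η +
        B₁ᶜ.indicator (fun η => (‖F x (supIdx x η)‖₊ : ℝ≥0∞)) η := by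
      funext η
      by_cases hη : η ∈ B₁
      · simp [hgdef, hη]
      · simp [hgdef, hη]
    rw [hgsplit, lintegral_add_left (measurable_const.indicator hB₁m),
      lintegral_indicator hB₁m, setLIntegral_const, lintegral_indicator hB₁m.compl]
    exact ENNReal.add_lt_top.mpr
      ⟨ENNReal.mul_lt_top hKtop hμB₁top, tail_lintegral_lt_top μ hμ F hFs x γ₁⟩
  calc (∫⁻ ξ, ∫⁻ η, (‖F x (sup3Idx x ξ η) * (φ ξ * (ψ η - ψ x))‖₊ : ℝ≥0∞) ∂μ ∂μ)
      ≤ ∫⁻ ξ, ∫⁻ η, B₁.indicator (fun _ => C) ξ * g η ∂μ ∂μ :=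
        lintegral_mono fun ξ => lintegral_mono fun η => hbound ξ η
    _ = ∫⁻ ξ, B₁.indicator (fun _ => C) ξ * ∫⁻ η, g η ∂μ ∂μ := by
        refine lintegral_congr fun ξ => ?_
        refine lintegral_const_mul' _ _ ?_
        exact ne_top_of_le_ne_top hCtop (Set.indicator_le_self _ _ ξ)
    _ = (C * ∫⁻ η, g η ∂μ) * μ B₁ := by
        have he : (fun ξ => B₁.indicator (fun _ => C) ξ * ∫⁻ η, g η ∂μ) =
            B₁.indicator (fun _ => C * ∫⁻ η, g η ∂μ) := by
          funext ξ
          by_cases hξ : ξ ∈ B₁ <;> simp [hξ]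
        rw [he, lintegral_indicator hB₁m, setLIntegral_const]
    _ < ⊤ := ENNReal.mul_lt_top (ENNReal.mul_lt_top hCtop.lt_top hI) hμB₁top
end Helpers2
end

section
/- Let F be a summable ball kernel, let φ be an ultrametric wavelet with ball I and ψ an ultrametric wavelet with ball J, and suppose the balls I and J are disjoint. Then 𝓘[φ, ψ](x) = 0 for every x ∈ ℚ_p. -/
open MeasureTheory

/-- The nonlinear interaction integral
`𝓘[φ,ψ](x) = ∫∫ F(sup(x,ξ,η)) φ(ξ)(ψ(η) - ψ(x)) dμ(ξ) dμ(η)`. -/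
noncomputable def IIntegral {p : ℕ} [Fact p.Prime] [MeasurableSpace ℚ_[p]]
    (μ : Measure ℚ_[p]) (F : ℚ_[p] → ℤ → ℂ) (φ ψ : ℚ_[p] → ℂ) (x : ℚ_[p]) : ℂ :=
  ∫ ξ, ∫ η, F x (sup3Idx x ξ η) * (φ ξ * (ψ η - ψ x)) ∂μ ∂μ


section DisjointHelpers

variable {p : ℕ} [Fact p.Prime]

private lemma one_lt_p' : (1 : ℝ) < (p : ℝ) := by
  exact_mod_cast (Fact.out : p.Prime).one_lt

private lemma supIdx_eq_of_norm_eq' {x y a b : ℚ_[p]} (hxy : x ≠ y) (h : ‖x - y‖ = ‖a - b‖) :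
    supIdx x y = supIdx a b := by
  have hab : a ≠ b := by
    intro h'
    rw [h', sub_self, norm_zero, norm_eq_zero, sub_eq_zero] at h
    exact hxy h
  have h1 := Padic.norm_eq_zpow_neg_valuation (sub_ne_zero.mpr hxy)
  have h2 := Padic.norm_eq_zpow_neg_valuation (sub_ne_zero.mpr hab)
  rw [h1, h2] at h
  have := zpow_right_injective₀ (by linarith [one_lt_p' (p := p)])
    (by linarith [one_lt_p' (p := p)]) h
  unfold supIdx; omega

private lemma supIdx_le' {x y : ℚ_[p]} {γ : ℤ} (hxy : x ≠ y) (h : ‖x - y‖ ≤ (p : ℝ) ^ γ) :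
    supIdx x y ≤ γ := by
  rw [Padic.norm_eq_zpow_neg_valuation (sub_ne_zero.mpr hxy)] at h
  exact (zpow_le_zpow_iff_right₀ (one_lt_p' (p := p))).mp h

private lemma lt_supIdx' {x y : ℚ_[p]} {γ : ℤ} (h : (p : ℝ) ^ γ < ‖x - y‖) : γ < supIdx x y := by
  have hxy : x ≠ y := by
    intro h'; rw [h', sub_self, norm_zero] at h
    exact absurd h (not_lt.mpr (zpow_pos (by linarith [one_lt_p' (p := p)]) γ).le)
  rw [Padic.norm_eq_zpow_neg_valuation (sub_ne_zero.mpr hxy)] at h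
  exact (zpow_lt_zpow_iff_right₀ (one_lt_p' (p := p))).mp h

/-- Ultrametric: if `‖b - c‖ < ‖a - c‖` then `‖a - b‖ = ‖a - c‖`. -/
private lemma norm_sub_eq_ultra' {a b c : ℚ_[p]} (h : ‖b - c‖ < ‖a - c‖) :
    ‖a - b‖ = ‖a - c‖ := by
  have hab : a - b = (a - c) + (c - b) := by ring
  have hcb : ‖c - b‖ = ‖b - c‖ := by rw [show c - b = -(b - c) by ring, norm_neg]
  rw [hab, Padic.add_eq_max_of_ne (by rw [hcb]; exact h.ne'), hcb]
  exact max_eq_left h.le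

/-- For `x, ξ` outside the ball `B(cJ, p^γJ)` and `η` inside it, the smallest ball
containing `x, ξ, η` does not depend on the position of `η` in the ball. -/
private lemma sup3Idx_const_right {x ξ η cJ : ℚ_[p]} {γJ : ℤ}
    (hx : (p : ℝ) ^ γJ < dist x cJ) (hξ : (p : ℝ) ^ γJ < dist ξ cJ)
    (hη : dist η cJ ≤ (p : ℝ) ^ γJ) : sup3Idx x ξ η = sup3Idx x ξ cJ := by
  by_cases hηc : η = cJ
  · rw [hηc]
  simp only [dist_eq_norm] at hx hξ hη
  have hxη : x ≠ η := fun h => absurd (h ▸ hη) (not_le.mpr hx)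
  have hξη : ξ ≠ η := fun h => absurd (h ▸ hη) (not_le.mpr hξ)
  have e1 : supIdx x η = supIdx x cJ :=
    supIdx_eq_of_norm_eq' hxη (norm_sub_eq_ultra' (lt_of_le_of_lt hη hx))
  have e2 : supIdx ξ η = supIdx ξ cJ :=
    supIdx_eq_of_norm_eq' hξη (norm_sub_eq_ultra' (lt_of_le_of_lt hη hξ))
  unfold sup3Idx
  rw [e1, e2]

/-- For `x` outside the ball `B(cI, p^γI)`, `ξ` inside it, and `η ∉ {ξ, cI}`, the smallest
ball containing `x, ξ, η` does not depend on the position of `ξ` in the ball. -/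
private lemma sup3Idx_const_mid {x ξ η cI : ℚ_[p]} {γI : ℤ}
    (hx : (p : ℝ) ^ γI < dist x cI) (hξ : dist ξ cI ≤ (p : ℝ) ^ γI)
    (hη1 : η ≠ ξ) (hη2 : η ≠ cI) : sup3Idx x ξ η = sup3Idx x cI η := by
  by_cases hξc : ξ = cI
  · rw [hξc]
  simp only [dist_eq_norm] at hx hξ
  have hxξ : x ≠ ξ := fun h => absurd (h ▸ hξ) (not_le.mpr hx)
  have e1 : supIdx x ξ = supIdx x cI :=
    supIdx_eq_of_norm_eq' hxξ (norm_sub_eq_ultra' (lt_of_le_of_lt hξ hx))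
  have hs : γI < supIdx x cI := lt_supIdx' hx
  by_cases hη : ‖η - cI‖ ≤ (p : ℝ) ^ γI
  · -- η in the ball: the third term is dominated on both sides
    have t1 : supIdx ξ η ≤ γI := by
      apply supIdx_le' (Ne.symm hη1)
      calc ‖ξ - η‖ = ‖(ξ - cI) + (cI - η)‖ := by ring_nf
        _ ≤ max ‖ξ - cI‖ ‖cI - η‖ := Padic.nonarchimedean _ _
        _ ≤ (p : ℝ) ^ γI := by
            rw [show cI - η = -(η - cI) by ring, norm_neg]
            exact max_le hξ hη
    have t2 : supIdx cI η ≤ γI := by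
      apply supIdx_le' (Ne.symm hη2)
      rw [show cI - η = -(η - cI) by ring, norm_neg]; exact hη
    unfold sup3Idx
    rw [e1]
    omega
  · -- η outside the ball
    push_neg at hη
    have e2 : supIdx ξ η = supIdx cI η := by
      apply supIdx_eq_of_norm_eq' (Ne.symm hη1)
      rw [norm_sub_rev ξ η, norm_sub_rev cI η]
      exact norm_sub_eq_ultra' (lt_of_le_of_lt hξ hη)
    unfold sup3Idx
    rw [e1, e2]

end DisjointHelpers

/-- If the balls `I` of `φ` and `J` of `ψ` are disjoint,
then `𝓘[φ,ψ](x) = 0` for every `x`. -/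
theorem I_integral_disjoint_balls {p : ℕ} [Fact p.Prime]
    [MeasurableSpace ℚ_[p]] [BorelSpace ℚ_[p]]
    (μ : Measure ℚ_[p]) [μ.IsAddHaarMeasure] (hμ : μ (Metric.closedBall 0 1) = 1)
    (F : ℚ_[p] → ℤ → ℂ) (hF : IsBallKernel F) (hFs : KernelSummable F)
    (φ ψ : ℚ_[p] → ℂ) (cI cJ : ℚ_[p]) (γI γJ : ℤ)
    (hφ : IsWavelet μ φ cI γI) (hψ : IsWavelet μ ψ cJ γJ)
    (hdisj : Disjoint (Metric.closedBall cI ((p : ℝ) ^ γI))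
      (Metric.closedBall cJ ((p : ℝ) ^ γJ))) :
    ∀ x : ℚ_[p], IIntegral μ F φ ψ x = 0 := by
  intro x
  have hφ0 : (∫ ξ, φ ξ ∂μ) = 0 := hφ.2.2.1
  have hψ0 : (∫ η, ψ η ∂μ) = 0 := hψ.2.2.1
  unfold IIntegral
  by_cases hxJ : dist x cJ ≤ (p : ℝ) ^ γJ
  · -- `x` is in the ball `J`, hence not in `I`
    have hxI : (p : ℝ) ^ γI < dist x cI := by
      by_contra h
      push_neg at h
      exact Set.disjoint_left.mp hdisj (Metric.mem_closedBall.mpr h)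
        (Metric.mem_closedBall.mpr hxJ)
    have key : ∀ ξ : ℚ_[p], (∫ η, F x (sup3Idx x ξ η) * (φ ξ * (ψ η - ψ x)) ∂μ) =
        φ ξ * ∫ η, F x (sup3Idx x cI η) * (ψ η - ψ x) ∂μ := by
      intro ξ
      by_cases hξ : dist ξ cI ≤ (p : ℝ) ^ γI
      · have hre : ∀ η, F x (sup3Idx x ξ η) * (φ ξ * (ψ η - ψ x)) =
            φ ξ * (F x (sup3Idx x ξ η) * (ψ η - ψ x)) := fun η => by ring
        simp only [hre]
        rw [MeasureTheory.integral_const_mul]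
        congr 1
        apply integral_congr_ae
        rw [Filter.EventuallyEq, ae_iff]
        refine measure_mono_null (t := ({ξ, cI} : Set ℚ_[p])) ?_
          (((Set.finite_singleton cI).insert ξ).measure_zero μ)
        intro η hη
        by_contra hmem
        simp only [Set.mem_insert_iff, Set.mem_singleton_iff, not_or] at hmem
        exact hη (by rw [sup3Idx_const_mid hxI hξ hmem.1 hmem.2])
      · have h0 : φ ξ = 0 := hφ.1 ξ (not_le.mp hξ)
        simp [h0]
    simp only [key]
    rw [MeasureTheory.integral_mul_const, hφ0, zero_mul]
  · -- `x` is outside the ball `J`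
    push_neg at hxJ
    have hψx : ψ x = 0 := hψ.1 x hxJ
    have key : ∀ ξ : ℚ_[p], (∫ η, F x (sup3Idx x ξ η) * (φ ξ * (ψ η - ψ x)) ∂μ) = 0 := by
      intro ξ
      by_cases hξI : dist ξ cI ≤ (p : ℝ) ^ γI
      · have hξJ : (p : ℝ) ^ γJ < dist ξ cJ := by
          by_contra h
          push_neg at h
          exact Set.disjoint_left.mp hdisj (Metric.mem_closedBall.mpr hξI)
            (Metric.mem_closedBall.mpr h)
        have heq : ∀ η, F x (sup3Idx x ξ η) * (φ ξ * (ψ η - ψ x)) =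
            (φ ξ * F x (sup3Idx x ξ cJ)) * ψ η := by
          intro η
          by_cases hη : dist η cJ ≤ (p : ℝ) ^ γJ
          · rw [sup3Idx_const_right hxJ hξJ hη, hψx]; ring
          · rw [hψ.1 η (not_le.mp hη), hψx]; ring
        simp only [heq]
        rw [MeasureTheory.integral_const_mul, hψ0, mul_zero]
      · simp [hφ.1 ξ (not_le.mp hξI)]
    simp only [key, integral_zero]
end
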